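/- arXiv:1506.00419 — 4 statements merged into one kernel-verified Lean document; each statement's English description precedes it below -/
import Mathlib

section
/- Let I be a nonzero ideal of O_K. For every nonzero α ∈ I, the Euclidean length of τ(α) satisfies ‖τ(α)‖ ≥ √m·|N_{K/ℚ}(α)|^{1/m} ≥ √m·N(I)^{1/m}. In particular, the minimum Euclidean distance of the lattice L_I = τ(I) satisfies d_E(L_I) ≥ √m·N(I)^{1/m}. -/
open scoped BigOperators
open MeasureTheory

noncomputable section

/-- The index set for `ℝ^{s+2t}`: `s` real coordinates and `t` pairs of coordinates. -/
abbrev PackIdx (s t : ℕ) := Fin s ⊕ Fin t × Fin 2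

/-- The canonical embedding `τ : K → ℝ^{s+2t}`,
`τ(α) = (ρ₁(α),…,ρ_s(α), √2·Re σ₁(α), √2·Im σ₁(α), …, √2·Re σ_t(α), √2·Im σ_t(α))`. -/
def tauEmb {K : Type*} [Field K] {s t : ℕ}
    (ρ : Fin s → (K →+* ℝ)) (σ : Fin t → (K →+* ℂ)) (α : K) :
    EuclideanSpace ℝ (PackIdx s t) :=
  (EuclideanSpace.equiv (PackIdx s t) ℝ).symm <|
    Sum.elim (fun i => ρ i α)
      (fun p => if p.2 = (0 : Fin 2) then Real.sqrt 2 * (σ p.1 α).re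
                else Real.sqrt 2 * (σ p.1 α).im)

/-- The system of `s + 2t` field embeddings `K → ℂ` determined by the data `ρ, σ`:
the real embeddings `ρᵢ` and the complex embeddings `σⱼ` together with their conjugates. -/
def embSystem {K : Type*} [Field K] {s t : ℕ}
    (ρ : Fin s → (K →+* ℝ)) (σ : Fin t → (K →+* ℂ)) : PackIdx s t → (K →+* ℂ) :=
  Sum.elim (fun i => Complex.ofRealHom.comp (ρ i))
    (fun p => if p.2 = (0 : Fin 2) then σ p.1 else (starRingEnd ℂ).comp (σ p.1))

/-- `ρ, σ` list exactly the real embeddings and the pairs of complex-conjugate embeddings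
of `K`, without repetition: the associated system of `s+2t` embeddings `K → ℂ` is a
bijective enumeration of all field embeddings `K → ℂ`. -/
def IsEmbSystem {K : Type*} [Field K] {s t : ℕ}
    (ρ : Fin s → (K →+* ℝ)) (σ : Fin t → (K →+* ℂ)) : Prop :=
  Function.Bijective (embSystem ρ σ)

/-- The minimum (infimal) Euclidean distance between two distinct points of `P`. -/
def minDist {E : Type*} [MetricSpace E] (P : Set E) : ℝ :=
  sInf {d : ℝ | ∃ x ∈ P, ∃ y ∈ P, x ≠ y ∧ dist x y = d}

/-- The volume `V_N` of the unit ball in `ℝ^N` (with index set `ι`, `N = |ι|`). -/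
def unitBallVol (ι : Type*) [Fintype ι] : ℝ :=
  (volume (Metric.ball (0 : EuclideanSpace ℝ ι) 1)).toReal

/-- The packing density
`Δ(P) = limsup_{R→∞} |P ∩ B(R)| · r^N · V_N / vol(B(R+r))`, where `r = d_E(P)/2`. -/
def packDensity {ι : Type*} [Fintype ι] (P : Set (EuclideanSpace ℝ ι)) : ℝ :=
  Filter.limsup (fun R : ℝ =>
    (Nat.card (P ∩ Metric.closedBall 0 R : Set (EuclideanSpace ℝ ι)) : ℝ) *
      (minDist P / 2) ^ (Fintype.card ι) * unitBallVol ι /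
      (volume (Metric.closedBall (0 : EuclideanSpace ℝ ι) (R + minDist P / 2))).toReal)
    Filter.atTop

/-- `L_I = τ(I)`, the image in `ℝ^{s+2t}` of an ideal `I` of the ring of integers under the
canonical embedding. -/
def idealImage {K : Type*} [Field K] [NumberField K] {s t : ℕ}
    (ρ : Fin s → (K →+* ℝ)) (σ : Fin t → (K →+* ℂ))
    (I : Ideal (NumberField.RingOfIntegers K)) : Set (EuclideanSpace ℝ (PackIdx s t)) :=
  (fun a : NumberField.RingOfIntegers K =>
    tauEmb ρ σ (algebraMap (NumberField.RingOfIntegers K) K a)) '' (I : Set _)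

/-- The coordinatewise extension `τ : K^n → ℝ^{mn}`. -/
def tauEmbN {K : Type*} [Field K] {s t : ℕ} {n : ℕ}
    (ρ : Fin s → (K →+* ℝ)) (σ : Fin t → (K →+* ℂ)) (c : Fin n → K) :
    EuclideanSpace ℝ (Fin n × PackIdx s t) :=
  (EuclideanSpace.equiv (Fin n × PackIdx s t) ℝ).symm fun p => tauEmb ρ σ (c p.1) p.2

/-- The Cartesian product `L^n ⊆ ℝ^{mn}` of `n` copies of `L ⊆ ℝ^m`. -/
def prodSet {ι : Type*} (n : ℕ) (L : Set (EuclideanSpace ℝ ι)) :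
    Set (EuclideanSpace ℝ (Fin n × ι)) :=
  {x | ∀ j : Fin n,
    ((EuclideanSpace.equiv ι ℝ).symm fun i => (EuclideanSpace.equiv (Fin n × ι) ℝ) x (j, i)) ∈ L}

/-- `S` is a valid alphabet set at level `i`: a set of `q` elements of `p^i` containing `0`
whose residues modulo `p^{i+1}` represent the `q` distinct elements of `p^i/p^{i+1}`. -/
def IsRepSet {K : Type*} [Field K] [NumberField K]
    (p : Ideal (NumberField.RingOfIntegers K)) (i q : ℕ)
    (S : Set (NumberField.RingOfIntegers K)) : Prop :=
  S ⊆ (p ^ i : Ideal (NumberField.RingOfIntegers K)) ∧ (0 : NumberField.RingOfIntegers K) ∈ S ∧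
    Nat.card S = q ∧
    (∀ x ∈ S, ∀ y ∈ S, x ≠ y → x - y ∉ (p ^ (i + 1) : Ideal (NumberField.RingOfIntegers K))) ∧
    (∀ z ∈ (p ^ i : Ideal (NumberField.RingOfIntegers K)), ∃ a ∈ S,
      z - a ∈ (p ^ (i + 1) : Ideal (NumberField.RingOfIntegers K)))

/-- Hamming distance between two words. -/
def hDist {n : ℕ} {A : Type*} (u v : Fin n → A) : ℕ := Nat.card {j : Fin n // u j ≠ v j}

/-- The minimum Hamming distance of a code `C`. -/
def codeMinDist {n : ℕ} {A : Type*} (C : Set (Fin n → A)) : ℕ :=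
  sInf {d : ℕ | ∃ u ∈ C, ∃ v ∈ C, u ≠ v ∧ hDist u v = d}

/-- `C` is an `(n, M, d)`-code over the alphabet set `S`. -/
def IsCode {A : Type*} {n : ℕ} (S : Set A) (M d : ℕ) (C : Set (Fin n → A)) : Prop :=
  (∀ c ∈ C, ∀ j, c j ∈ S) ∧ Nat.card C = M ∧ codeMinDist C = d

/-- The translate `τ(c) + P` of `P` by the embedded codeword `c`. -/
def wordTranslate {K : Type*} [Field K] [NumberField K] {s t n : ℕ}
    (ρ : Fin s → (K →+* ℝ)) (σ : Fin t → (K →+* ℂ))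
    (c : Fin n → NumberField.RingOfIntegers K)
    (P : Set (EuclideanSpace ℝ (Fin n × PackIdx s t))) :
    Set (EuclideanSpace ℝ (Fin n × PackIdx s t)) :=
  {z | ∃ x ∈ P, z = tauEmbN ρ σ (fun j => algebraMap (NumberField.RingOfIntegers K) K (c j)) + x}

/-- The concatenation `τ(C) + P = { τ(c) + p : c ∈ C, p ∈ P }`. -/
def codeTranslate {K : Type*} [Field K] [NumberField K] {s t n : ℕ}
    (ρ : Fin s → (K →+* ℝ)) (σ : Fin t → (K →+* ℂ))
    (C : Set (Fin n → NumberField.RingOfIntegers K))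
    (P : Set (EuclideanSpace ℝ (Fin n × PackIdx s t))) :
    Set (EuclideanSpace ℝ (Fin n × PackIdx s t)) :=
  {z | ∃ c ∈ C, ∃ x ∈ P,
    z = tauEmbN ρ σ (fun j => algebraMap (NumberField.RingOfIntegers K) K (c j)) + x}

/-- The concatenation `τ(𝒞) + P = { Σ_{i<ℓ} τ(cᵢ) + p : cᵢ ∈ Cᵢ, p ∈ P }` of a family of codes. -/
def famTranslate {K : Type*} [Field K] [NumberField K] {s t n ℓ : ℕ}
    (ρ : Fin s → (K →+* ℝ)) (σ : Fin t → (K →+* ℂ))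
    (C : Fin ℓ → Set (Fin n → NumberField.RingOfIntegers K))
    (P : Set (EuclideanSpace ℝ (Fin n × PackIdx s t))) :
    Set (EuclideanSpace ℝ (Fin n × PackIdx s t)) :=
  {z | ∃ c : Fin ℓ → (Fin n → NumberField.RingOfIntegers K), (∀ i, c i ∈ C i) ∧ ∃ x ∈ P,
    z = (∑ i : Fin ℓ,
      tauEmbN ρ σ (fun j => algebraMap (NumberField.RingOfIntegers K) K (c i j))) + x}



namespace Statement1Aux

open NumberField

variable {K : Type*} [Field K] {s t : ℕ}

lemma tauEmb_apply (ρ : Fin s → (K →+* ℝ)) (σ : Fin t → (K →+* ℂ)) (α : K)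
    (idx : PackIdx s t) :
    tauEmb ρ σ α idx = Sum.elim (fun i => ρ i α)
      (fun p => if p.2 = (0 : Fin 2) then Real.sqrt 2 * (σ p.1 α).re
                else Real.sqrt 2 * (σ p.1 α).im) idx := rfl

lemma tauEmb_zero (ρ : Fin s → (K →+* ℝ)) (σ : Fin t → (K →+* ℂ)) :
    tauEmb ρ σ 0 = 0 := by
  ext idx
  rcases idx with i | ⟨j, k⟩
  · simp [tauEmb_apply]
  · by_cases hk : k = 0 <;> simp [tauEmb_apply, hk]

lemma tauEmb_sub (ρ : Fin s → (K →+* ℝ)) (σ : Fin t → (K →+* ℂ)) (x y : K) :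
    tauEmb ρ σ (x - y) = tauEmb ρ σ x - tauEmb ρ σ y := by
  ext idx
  rw [PiLp.sub_apply]
  rcases idx with i | ⟨j, k⟩
  · simp [tauEmb_apply]
  · by_cases hk : k = 0 <;> simp [tauEmb_apply, hk, mul_sub]

lemma norm_tauEmb_sq (ρ : Fin s → (K →+* ℝ)) (σ : Fin t → (K →+* ℂ)) (α : K) :
    ‖tauEmb ρ σ α‖ ^ 2 = ∑ idx : PackIdx s t, ‖embSystem ρ σ idx α‖ ^ 2 := by
  rw [EuclideanSpace.norm_eq, Real.sq_sqrt (Finset.sum_nonneg fun _ _ => sq_nonneg _)]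
  rw [Fintype.sum_sum_type, Fintype.sum_sum_type]
  congr 1
  · refine Finset.sum_congr rfl fun i _ => ?_
    simp [tauEmb_apply, embSystem, Real.norm_eq_abs, sq_abs, Complex.norm_real]
  · rw [Fintype.sum_prod_type, Fintype.sum_prod_type]
    refine Finset.sum_congr rfl fun j _ => ?_
    rw [Fin.sum_univ_two, Fin.sum_univ_two]
    have h0 : ((0 : Fin 2) = 0) = True := by simp
    have h1 : ((1 : Fin 2) = 0) = False := by simp [Fin.ext_iff]
    simp only [tauEmb_apply, embSystem, Sum.elim_inr, h0, h1, if_true, if_false,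
      Real.norm_eq_abs, sq_abs, RingHom.coe_comp, Function.comp_apply, Complex.norm_conj]
    have h2 : Real.sqrt 2 ^ 2 = 2 := Real.sq_sqrt (by norm_num)
    rw [Complex.sq_norm, Complex.normSq_apply]
    rw [mul_pow, mul_pow, h2]
    ring

lemma abs_norm_eq_prod [NumberField K] (x : K) :
    |(Algebra.norm ℚ x : ℝ)| = ∏ φ : K →+* ℂ, ‖φ x‖ := by
  have h1 : ‖algebraMap ℚ ℂ (Algebra.norm ℚ x)‖
      = ∏ φ : K →+* ℂ, ‖φ x‖ := by
    rw [Algebra.norm_eq_prod_embeddings, norm_prod]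
    exact (Fintype.prod_equiv (RingHom.equivRatAlgHom K ℂ) _ _ fun φ => rfl).symm
  rw [← h1, show algebraMap ℚ ℂ (Algebra.norm ℚ x) = (((Algebra.norm ℚ x : ℚ) : ℝ) : ℂ) by
    push_cast; rfl, Complex.norm_real, Real.norm_eq_abs]

lemma key_ineq [NumberField K] {m : ℕ}
    (ρ : Fin s → (K →+* ℝ)) (σ : Fin t → (K →+* ℂ)) (hemb : IsEmbSystem ρ σ)
    (hm : m = s + 2 * t) (α : K) :
    Real.sqrt (m : ℝ) * |(Algebra.norm ℚ α : ℝ)| ^ ((1 : ℝ) / m) ≤ ‖tauEmb ρ σ α‖ := by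
  have hcard : Fintype.card (PackIdx s t) = m := by
    simp [hm, Fintype.card_sum, Fintype.card_prod]
    ring
  have hm0 : 0 < m := by
    rw [← hcard, Fintype.card_of_bijective hemb, NumberField.Embeddings.card K ℂ]
    exact Module.finrank_pos
  have hmR : (0 : ℝ) < (m : ℝ) := by exact_mod_cast hm0
  set z : PackIdx s t → ℝ := fun idx => ‖embSystem ρ σ idx α‖ ^ 2 with hz
  have hzn : ∀ i ∈ Finset.univ, (0 : ℝ) ≤ z i := fun i _ => sq_nonneg _
  have hwsum : ∑ _i : PackIdx s t, (1 : ℝ) / m = 1 := by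
    rw [Finset.sum_const, nsmul_eq_mul, Finset.card_univ, hcard]
    field_simp
  have hgm := Real.geom_mean_le_arith_mean_weighted Finset.univ (fun _ => (1 : ℝ) / m) z
    (fun _ _ => by positivity) hwsum hzn
  have hNn : (0 : ℝ) ≤ |(Algebra.norm ℚ α : ℝ)| := abs_nonneg _
  have hprodz : ∏ i : PackIdx s t, z i = |(Algebra.norm ℚ α : ℝ)| ^ 2 := by
    have h3 : ∏ i : PackIdx s t, z i
        = (∏ i : PackIdx s t, ‖embSystem ρ σ i α‖) ^ 2 :=
      Finset.prod_pow _ _ _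
    rw [h3, abs_norm_eq_prod]
    congr 1
    exact Fintype.prod_bijective _ hemb _ _ fun idx => rfl
  have hlhs : ∏ i : PackIdx s t, z i ^ ((1 : ℝ) / m)
      = (|(Algebra.norm ℚ α : ℝ)| ^ ((1 : ℝ) / m)) ^ 2 := by
    rw [Real.finset_prod_rpow _ _ hzn, hprodz, ← Real.rpow_natCast |(Algebra.norm ℚ α : ℝ)| 2,
      ← Real.rpow_mul hNn, mul_comm, Real.rpow_mul hNn, Real.rpow_natCast]
  have hrhs : ∑ i : PackIdx s t, (1 : ℝ) / m * z i = 1 / m * ‖tauEmb ρ σ α‖ ^ 2 := by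
    rw [← Finset.mul_sum, norm_tauEmb_sq]
  rw [hlhs, hrhs] at hgm
  have hsq : (Real.sqrt (m : ℝ) * |(Algebra.norm ℚ α : ℝ)| ^ ((1 : ℝ) / m)) ^ 2
      ≤ ‖tauEmb ρ σ α‖ ^ 2 := by
    rw [mul_pow, Real.sq_sqrt hmR.le]
    calc (m : ℝ) * (|(Algebra.norm ℚ α : ℝ)| ^ ((1 : ℝ) / m)) ^ 2
        ≤ (m : ℝ) * (1 / m * ‖tauEmb ρ σ α‖ ^ 2) :=
          mul_le_mul_of_nonneg_left hgm hmR.le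
      _ = ‖tauEmb ρ σ α‖ ^ 2 := by field_simp
  exact le_of_pow_le_pow_left₀ two_ne_zero (norm_nonneg _) hsq

lemma absNorm_le [NumberField K] (I : Ideal (NumberField.RingOfIntegers K))
    (α : NumberField.RingOfIntegers K) (hα : α ∈ I) (h0 : α ≠ 0) :
    (Ideal.absNorm I : ℝ) ≤
      |(Algebra.norm ℚ (algebraMap (NumberField.RingOfIntegers K) K α) : ℝ)| := by
  have hdvd : (Ideal.absNorm I : ℤ) ∣ Algebra.norm ℤ α := Ideal.absNorm_dvd_norm_of_mem hα
  have hne : Algebra.norm ℤ α ≠ 0 := Algebra.norm_ne_zero_iff.mpr h0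
  have hle : (Ideal.absNorm I : ℤ) ≤ |Algebra.norm ℤ α| :=
    Int.le_of_dvd (abs_pos.mpr hne) ((dvd_abs _ _).mpr hdvd)
  rw [← Algebra.coe_norm_int]
  exact_mod_cast hle

end Statement1Aux

/-- For every nonzero `α` in a nonzero ideal `I` of `O_K`,
`‖τ(α)‖ ≥ √m·|N_{K/ℚ}(α)|^{1/m} ≥ √m·N(I)^{1/m}`; in particular
`d_E(L_I) ≥ √m·N(I)^{1/m}`. -/
theorem statement1 {K : Type*} [Field K] [NumberField K] {s t m : ℕ}
    (ρ : Fin s → (K →+* ℝ)) (σ : Fin t → (K →+* ℂ)) (hemb : IsEmbSystem ρ σ)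
    (hm : m = s + 2 * t)
    (I : Ideal (NumberField.RingOfIntegers K)) (hI : I ≠ ⊥) :
    (∀ α : NumberField.RingOfIntegers K, α ∈ I → α ≠ 0 →
      Real.sqrt (m : ℝ) * (Ideal.absNorm I : ℝ) ^ ((1 : ℝ) / m) ≤
        Real.sqrt (m : ℝ) *
          |(Algebra.norm ℚ (algebraMap (NumberField.RingOfIntegers K) K α) : ℝ)| ^ ((1 : ℝ) / m) ∧
      Real.sqrt (m : ℝ) *
          |(Algebra.norm ℚ (algebraMap (NumberField.RingOfIntegers K) K α) : ℝ)| ^ ((1 : ℝ) / m) ≤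
        ‖tauEmb ρ σ (algebraMap (NumberField.RingOfIntegers K) K α)‖) ∧
    Real.sqrt (m : ℝ) * (Ideal.absNorm I : ℝ) ^ ((1 : ℝ) / m) ≤
      minDist (idealImage ρ σ I) := by
  classical
  have key : ∀ α : NumberField.RingOfIntegers K, α ∈ I → α ≠ 0 →
      Real.sqrt (m : ℝ) * (Ideal.absNorm I : ℝ) ^ ((1 : ℝ) / m) ≤
        Real.sqrt (m : ℝ) *
          |(Algebra.norm ℚ (algebraMap (NumberField.RingOfIntegers K) K α) : ℝ)| ^ ((1 : ℝ) / m) ∧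
      Real.sqrt (m : ℝ) *
          |(Algebra.norm ℚ (algebraMap (NumberField.RingOfIntegers K) K α) : ℝ)| ^ ((1 : ℝ) / m) ≤
        ‖tauEmb ρ σ (algebraMap (NumberField.RingOfIntegers K) K α)‖ := by
    intro α hαI hα0
    refine ⟨?_, Statement1Aux.key_ineq ρ σ hemb hm _⟩
    refine mul_le_mul_of_nonneg_left ?_ (Real.sqrt_nonneg _)
    exact Real.rpow_le_rpow (Nat.cast_nonneg _)
      (Statement1Aux.absNorm_le I α hαI hα0) (by positivity)
  refine ⟨key, ?_⟩
  set B := Real.sqrt (m : ℝ) * (Ideal.absNorm I : ℝ) ^ ((1 : ℝ) / m) with hB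
  have hm0 : 0 < m := by
    have hcard : Fintype.card (PackIdx s t) = m := by
      simp [hm, Fintype.card_sum, Fintype.card_prod]; ring
    rw [← hcard, Fintype.card_of_bijective hemb, NumberField.Embeddings.card K ℂ]
    exact Module.finrank_pos
  have hNI : (0 : ℝ) < (Ideal.absNorm I : ℝ) := by
    have : Ideal.absNorm I ≠ 0 := fun h => hI (Ideal.absNorm_eq_zero_iff.mp h)
    exact_mod_cast Nat.pos_of_ne_zero this
  have hBpos : 0 < B := by
    have h1 : (0 : ℝ) < Real.sqrt (m : ℝ) := Real.sqrt_pos.mpr (by exact_mod_cast hm0)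
    exact mul_pos h1 (Real.rpow_pos_of_pos hNI _)
  obtain ⟨α, hαI, hα0⟩ := Submodule.exists_mem_ne_zero_of_ne_bot hI
  have hx : tauEmb ρ σ (algebraMap (NumberField.RingOfIntegers K) K α) ∈ idealImage ρ σ I :=
    ⟨α, hαI, rfl⟩
  have hy : (0 : EuclideanSpace ℝ (PackIdx s t)) ∈ idealImage ρ σ I :=
    ⟨0, I.zero_mem, by simp [map_zero, Statement1Aux.tauEmb_zero]⟩
  have hxne : tauEmb ρ σ (algebraMap (NumberField.RingOfIntegers K) K α) ≠ 0 := by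
    intro h
    have h2 := (key α hαI hα0).1.trans (key α hαI hα0).2
    rw [h, norm_zero] at h2
    exact absurd (hBpos.trans_le h2) (lt_irrefl 0)
  refine le_csInf ⟨_, tauEmb ρ σ (algebraMap (NumberField.RingOfIntegers K) K α), hx, 0, hy,
    hxne, rfl⟩ ?_
  rintro d ⟨x, ⟨a, haI, rfl⟩, y, ⟨b, hbI, rfl⟩, hxy, rfl⟩
  have hab : a - b ≠ 0 := by
    intro h
    exact hxy (by rw [sub_eq_zero] at h; rw [h])
  have hmem : a - b ∈ I := I.sub_mem haI hbI
  have h2 := (key (a - b) hmem hab).1.trans (key (a - b) hmem hab).2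
  rw [dist_eq_norm, ← Statement1Aux.tauEmb_sub]
  rwa [map_sub] at h2


end
end

section
/- The minimum Euclidean distance of the lattice L_{O_K} = τ(O_K), the image of the ring of integers O_K under the canonical embedding τ, is exactly √m, where m = [K:ℚ]. -/
open scoped BigOperators
open MeasureTheory

noncomputable section

section AuxL
variable {K : Type*} [Field K] {s t : ℕ} (ρ : Fin s → (K →+* ℝ)) (σ : Fin t → (K →+* ℂ))

lemma tauEmb_apply (α : K) (i : PackIdx s t) :
    tauEmb ρ σ α i = Sum.elim (fun i => ρ i α)
      (fun p => if p.2 = (0 : Fin 2) then Real.sqrt 2 * (σ p.1 α).re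
                else Real.sqrt 2 * (σ p.1 α).im) i := rfl

lemma tauEmb_sub (a b : K) : tauEmb ρ σ (a - b) = tauEmb ρ σ a - tauEmb ρ σ b := by
  ext i
  have hsub : (tauEmb ρ σ a - tauEmb ρ σ b) i = tauEmb ρ σ a i - tauEmb ρ σ b i := rfl
  rw [hsub]
  rcases i with i | ⟨j, k⟩
  · simp [tauEmb_apply, map_sub]
  · by_cases hk : k = 0 <;> simp [tauEmb_apply, hk, map_sub, Complex.sub_re, Complex.sub_im] <;> ring

lemma prod_abs_eq {K : Type*} [Field K] [NumberField K] (x : K) :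
    (∏ φ : K →+* ℂ, ‖φ x‖) = ((|(Algebra.norm ℚ x : ℚ)| : ℚ) : ℝ) := by
  have h := congr_arg (norm : ℂ → ℝ) (Algebra.norm_eq_prod_embeddings ℚ ℂ (x := x))
  rw [norm_prod] at h
  rw [Fintype.prod_equiv (RingHom.equivRatAlgHom K ℂ) (fun φ => ‖φ x‖)
      (fun f => ‖f x‖) (fun _ => by simp [RingHom.equivRatAlgHom_apply])]
  rw [← h, eq_ratCast]
  rw [Rat.cast_abs, show ((Algebra.norm ℚ x : ℚ) : ℂ) = (((Algebra.norm ℚ x : ℚ) : ℝ) : ℂ)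
    by push_cast; ring, Complex.norm_real, Real.norm_eq_abs]

lemma sum_tau_sq [NumberField K] (hemb : IsEmbSystem ρ σ) (γ : K) :
    ∑ i : PackIdx s t, (tauEmb ρ σ γ i) ^ 2 = ∑ φ : K →+* ℂ, ‖φ γ‖ ^ 2 := by
  have h1 : ∑ i : PackIdx s t, (tauEmb ρ σ γ i) ^ 2
      = ∑ i : PackIdx s t, ‖embSystem ρ σ i γ‖ ^ 2 := by
    rw [Fintype.sum_sum_type, Fintype.sum_sum_type, Fintype.sum_prod_type, Fintype.sum_prod_type]
    congr 1
    · refine Finset.sum_congr rfl fun i _ => ?_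
      simp [tauEmb_apply, embSystem, Complex.sq_norm, Complex.normSq_apply]
    · refine Finset.sum_congr rfl fun j _ => ?_
      rw [Fin.sum_univ_two, Fin.sum_univ_two]
      have h2 : (Real.sqrt 2) ^ 2 = 2 := Real.sq_sqrt (by norm_num)
      simp only [tauEmb_apply, embSystem, Sum.elim_inr]
      norm_num
      simp [Complex.sq_norm, Complex.normSq_apply, mul_pow, h2, Complex.conj_re, Complex.conj_im]
      ring
  rw [h1]
  exact Fintype.sum_bijective _ hemb _ _ (fun i => rfl)

lemma norm_tau (γ : K) :
    ‖tauEmb ρ σ γ‖ = Real.sqrt (∑ i : PackIdx s t, (tauEmb ρ σ γ i) ^ 2) := by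
  rw [EuclideanSpace.norm_eq]
  congr 1
  exact Finset.sum_congr rfl fun i _ => by rw [Real.norm_eq_abs, sq_abs]

lemma key_lower {K : Type*} [Field K] [NumberField K] (γ : NumberField.RingOfIntegers K)
    (hγ : γ ≠ 0) :
    (Module.finrank ℚ K : ℝ) ≤ ∑ φ : K →+* ℂ, ‖φ (algebraMap _ K γ)‖ ^ 2 := by
  set x : K := algebraMap _ K γ
  set n := Fintype.card (K →+* ℂ) with hn
  have hcard : n = Module.finrank ℚ K := NumberField.Embeddings.card K ℂ
  have hnpos : 0 < n := by rw [hcard]; exact Module.finrank_pos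
  have hnR : (0:ℝ) < n := by exact_mod_cast hnpos
  have h := Real.geom_mean_le_arith_mean_weighted (Finset.univ : Finset (K →+* ℂ)) (fun _ => (n:ℝ)⁻¹)
    (fun φ => ‖φ x‖ ^ 2) (fun _ _ => by positivity)
    (by rw [Finset.sum_const, Finset.card_univ, ← hn, nsmul_eq_mul]; field_simp) (fun _ _ => sq_nonneg _)
  have hprodge : (1:ℝ) ≤ ∏ φ : K →+* ℂ, (‖φ x‖ ^ 2) ^ ((n:ℝ)⁻¹) := by
    rw [Real.finset_prod_rpow Finset.univ (fun φ : K →+* ℂ => ‖φ x‖ ^ 2) (fun _ _ => sq_nonneg _) ((n:ℝ)⁻¹)]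
    apply Real.one_le_rpow _ (by positivity)
    have : ∏ φ : K →+* ℂ, ‖φ x‖ ^ 2 = (∏ φ : K →+* ℂ, ‖φ x‖) ^ 2 := by
      rw [Finset.prod_pow]
    rw [this, prod_abs_eq]
    have h1 : (1:ℝ) ≤ ((|(Algebra.norm ℚ x : ℚ)| : ℚ) : ℝ) := by
      rw [show (x : K) = (algebraMap _ K γ) from rfl]
      rw [← Algebra.coe_norm_int]
      have : (1:ℤ) ≤ |Algebra.norm ℤ γ| := Int.one_le_abs (Algebra.norm_ne_zero_iff.mpr hγ)
      push_cast
      exact_mod_cast this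
    nlinarith
  have hsum : (1:ℝ) ≤ ∑ φ : K →+* ℂ, (n:ℝ)⁻¹ * ‖φ x‖ ^ 2 :=
    le_trans hprodge h
  rw [← Finset.mul_sum] at hsum
  rw [← hcard]
  calc (n:ℝ) = n * 1 := by ring
  _ ≤ n * ((n:ℝ)⁻¹ * ∑ φ : K →+* ℂ, ‖φ x‖ ^ 2) := by
      exact mul_le_mul_of_nonneg_left hsum (le_of_lt hnR)
  _ = ∑ φ : K →+* ℂ, ‖φ x‖ ^ 2 := by field_simp

end AuxL

/-- The minimum Euclidean distance of the lattice `L_{O_K} = τ(O_K)`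
is exactly `√m`, where `m = [K:ℚ]`. -/
theorem statement3 {K : Type*} [Field K] [NumberField K] {s t m : ℕ}
    (ρ : Fin s → (K →+* ℝ)) (σ : Fin t → (K →+* ℂ)) (hemb : IsEmbSystem ρ σ)
    (hm : m = s + 2 * t) (hdeg : m = Module.finrank ℚ K) :
    minDist (idealImage ρ σ (⊤ : Ideal (NumberField.RingOfIntegers K))) = Real.sqrt (m : ℝ) := by
  classical
  set R := NumberField.RingOfIntegers K
  set f : R → EuclideanSpace ℝ (PackIdx s t) := fun a => tauEmb ρ σ (algebraMap R K a) with hf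
  have hmpos : 0 < m := by rw [hdeg]; exact Module.finrank_pos
  have hnorm : ∀ γ : R, γ ≠ 0 → Real.sqrt m ≤ ‖f γ‖ := by
    intro γ hγ
    rw [hf, norm_tau]
    apply Real.sqrt_le_sqrt
    rw [sum_tau_sq ρ σ hemb]
    have := key_lower γ hγ
    rw [← hdeg] at this
    exact this
  have hone : ‖f 1‖ = Real.sqrt m := by
    rw [hf, norm_tau, sum_tau_sq ρ σ hemb]
    have h1 : ∀ φ : K →+* ℂ, ‖φ (algebraMap R K 1)‖ ^ 2 = 1 := by
      intro φ; simp [map_one]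
    rw [Finset.sum_congr rfl (fun φ _ => h1 φ), Finset.sum_const, Finset.card_univ,
      NumberField.Embeddings.card K ℂ, ← hdeg]
    simp
  have hdist : ∀ a b : R, a ≠ b → dist (f a) (f b) = ‖f (a - b)‖ := by
    intro a b _
    rw [dist_eq_norm, hf]
    simp only
    rw [← tauEmb_sub, ← map_sub]
  have hlb : ∀ d ∈ {d : ℝ | ∃ x ∈ idealImage ρ σ (⊤ : Ideal R), ∃ y ∈ idealImage ρ σ (⊤ : Ideal R),
      x ≠ y ∧ dist x y = d}, Real.sqrt m ≤ d := by
    rintro d ⟨x, hx, y, hy, hne, rfl⟩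
    obtain ⟨a, -, rfl⟩ := hx
    obtain ⟨b, -, rfl⟩ := hy
    have hab : a ≠ b := by rintro rfl; exact hne rfl
    rw [hdist a b hab]
    exact hnorm _ (sub_ne_zero.mpr hab)
  have hmem : Real.sqrt m ∈ {d : ℝ | ∃ x ∈ idealImage ρ σ (⊤ : Ideal R),
      ∃ y ∈ idealImage ρ σ (⊤ : Ideal R), x ≠ y ∧ dist x y = d} := by
    refine ⟨f 1, ⟨1, by simp, rfl⟩, f 0, ⟨0, by simp, rfl⟩, ?_, ?_⟩
    · intro h
      have : dist (f 1) (f 0) = 0 := by rw [h, dist_self]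
      rw [hdist 1 0 one_ne_zero, sub_zero, hone] at this
      have : (0:ℝ) < Real.sqrt m := Real.sqrt_pos.mpr (by exact_mod_cast hmpos)
      linarith [this]
    · rw [hdist 1 0 one_ne_zero, sub_zero, hone]
  unfold minDist
  apply le_antisymm
  · exact csInf_le ⟨Real.sqrt m, hlb⟩ hmem
  · exact le_csInf ⟨Real.sqrt m, hmem⟩ hlb


end
end

section
/- Let p be a nonzero prime ideal of O_K, let i₀ ≥ 1, let P ⊆ L_{i₀}^n, and let C be a q-ary code of length n over the alphabet set S_{i₀-1} containing the zero codeword. If P is a lattice (a discrete additive subgroup of ℝ^{mn}) and C satisfies the property that for any codewords u, v ∈ C there exist a codeword w ∈ C and a point p ∈ P with τ(u) + τ(v) = τ(w) + p, then τ(C) + P is also a lattice in ℝ^{mn}. -/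
open scoped BigOperators
open MeasureTheory

noncomputable section

/-- If `P` is a lattice (a discrete additive subgroup of `ℝ^{mn}`) and `C` is
closed under addition modulo `P` (for any `u, v ∈ C` there are `w ∈ C` and `p ∈ P` with
`τ(u) + τ(v) = τ(w) + p`), then `τ(C) + P` is also a lattice in `ℝ^{mn}`. -/
theorem statement8 {K : Type*} [Field K] [NumberField K] {s t m : ℕ}
    (ρ : Fin s → (K →+* ℝ)) (σ : Fin t → (K →+* ℂ)) (hemb : IsEmbSystem ρ σ)
    (hm : m = s + 2 * t)
    (p : Ideal (NumberField.RingOfIntegers K)) (hp : p.IsPrime) (hp0 : p ≠ ⊥)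
    (q : ℕ) (hq : Ideal.absNorm p = q) (i0 : ℕ) (hi0 : 1 ≤ i0) {n : ℕ}
    (P : Set (EuclideanSpace ℝ (Fin n × PackIdx s t)))
    (hP : P ⊆ prodSet n (idealImage ρ σ (p ^ i0)))
    (S : Set (NumberField.RingOfIntegers K)) (hS : IsRepSet p (i0 - 1) q S)
    (C : Set (Fin n → NumberField.RingOfIntegers K)) (hCS : ∀ c ∈ C, ∀ j, c j ∈ S)
    (h0C : (fun _ => (0 : NumberField.RingOfIntegers K)) ∈ C)
    (Λ : AddSubgroup (EuclideanSpace ℝ (Fin n × PackIdx s t)))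
    (hΛ : (Λ : Set (EuclideanSpace ℝ (Fin n × PackIdx s t))) = P) (hΛd : DiscreteTopology Λ)
    (hclosed : ∀ u ∈ C, ∀ v ∈ C, ∃ w ∈ C, ∃ x ∈ P,
      tauEmbN ρ σ (fun j => algebraMap (NumberField.RingOfIntegers K) K (u j)) +
        tauEmbN ρ σ (fun j => algebraMap (NumberField.RingOfIntegers K) K (v j)) =
      tauEmbN ρ σ (fun j => algebraMap (NumberField.RingOfIntegers K) K (w j)) + x) :
    ∃ Λ' : AddSubgroup (EuclideanSpace ℝ (Fin n × PackIdx s t)),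
      (Λ' : Set (EuclideanSpace ℝ (Fin n × PackIdx s t))) = codeTranslate ρ σ C P ∧
      DiscreteTopology Λ' := by
  classical
  subst hq
  set τ : (Fin n → NumberField.RingOfIntegers K) → EuclideanSpace ℝ (Fin n × PackIdx s t) :=
    fun c => tauEmbN ρ σ (fun j => algebraMap (NumberField.RingOfIntegers K) K (c j)) with hτdef
  set π : _ →+ _ := QuotientAddGroup.mk' Λ with hπdef
  -- τ 0 = 0
  have hτ0 : τ (fun _ => (0 : NumberField.RingOfIntegers K)) = 0 := by
    simp only [hτdef]
    ext ⟨j, i⟩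
    rcases i with i | pq
    · simp [tauEmbN, tauEmb]
    · simp [tauEmbN, tauEmb]
  -- finiteness of the code
  have hq0 : Ideal.absNorm p ≠ 0 := fun h => hp0 (Ideal.absNorm_eq_zero_iff.mp h)
  have hSfin : S.Finite := by
    have h1 : Nat.card S ≠ 0 := by rw [hS.2.2.1]; exact hq0
    have := (Nat.card_ne_zero.mp h1).2
    exact Set.toFinite S
  have hCfin : C.Finite := by
    apply Set.Finite.subset (Set.Finite.pi (fun _ : Fin n => hSfin))
    intro c hc
    simp only [Set.mem_pi, Set.mem_univ, forall_true_left]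
    exact fun j => hCS c hc j
  set T : Set (EuclideanSpace ℝ (Fin n × PackIdx s t) ⧸ Λ) := ⇑π '' (τ '' C) with hTdef
  have hTfin : T.Finite := (hCfin.image τ).image _
  have h0T : (0 : EuclideanSpace ℝ (Fin n × PackIdx s t) ⧸ Λ) ∈ T :=
    ⟨τ (fun _ => 0), ⟨_, h0C, rfl⟩, by rw [hτ0, map_zero]⟩
  have hTadd : ∀ a ∈ T, ∀ b ∈ T, a + b ∈ T := by
    rintro a ⟨-, ⟨u, hu, rfl⟩, rfl⟩ b ⟨-, ⟨v, hv, rfl⟩, rfl⟩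
    obtain ⟨w, hw, x, hx, hxe⟩ := hclosed u hu v hv
    refine ⟨τ w, ⟨w, hw, rfl⟩, ?_⟩
    rw [← hΛ] at hx
    have hxz : π x = 0 := (QuotientAddGroup.eq_zero_iff x).mpr hx
    rw [← map_add]
    have : τ u + τ v = τ w + x := hxe
    rw [this, map_add, hxz, add_zero]
  have hTneg : ∀ a ∈ T, -a ∈ T := by
    intro a ha
    have hpow : ∀ k : ℕ, (k + 1) • a ∈ T := by
      intro k
      induction k with
      | zero => simpa using ha
      | succ k ih =>
        have h2 := hTadd _ ih _ ha
        rwa [← succ_nsmul] at h2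
    obtain ⟨k1, -, k2, -, hk, he⟩ := Set.infinite_univ.exists_ne_map_eq_of_mapsTo
      (f := fun k : ℕ => (k + 1) • a) (fun k _ => hpow k) hTfin
    wlog hlt : k1 < k2 generalizing k1 k2
    · exact this k2 k1 hk.symm he.symm (by omega)
    have hz : (k2 - k1) • a = 0 := by
      have h3 : (k2 - k1) • a + (k1 + 1) • a = 0 + (k1 + 1) • a := by
        rw [zero_add, ← add_nsmul, show k2 - k1 + (k1 + 1) = k2 + 1 by omega]
        exact he.symm
      exact add_right_cancel h3
    have hneg : -a = (k2 - k1 - 1) • a := by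
      apply neg_eq_of_add_eq_zero_left
      rw [← succ_nsmul, show k2 - k1 - 1 + 1 = k2 - k1 by omega]
      exact hz
    rcases Nat.eq_zero_or_pos (k2 - k1 - 1) with h | h
    · rw [hneg, h, zero_nsmul]; exact h0T
    · obtain ⟨k, hk'⟩ : ∃ k, k2 - k1 - 1 = k + 1 := ⟨k2 - k1 - 2, by omega⟩
      rw [hneg, hk']; exact hpow k
  refine ⟨{ carrier := ⇑π ⁻¹' T
            add_mem' := fun {a b} ha hb => by
              simp only [Set.mem_preimage, map_add] at *
              exact hTadd _ ha _ hb
            zero_mem' := by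
              simp only [Set.mem_preimage, map_zero]; exact h0T
            neg_mem' := fun {a} ha => by
              simp only [Set.mem_preimage, map_neg] at *
              exact hTneg _ ha }, ?_, ?_⟩
  · show ⇑π ⁻¹' T = codeTranslate ρ σ C P
    ext z
    simp only [codeTranslate, Set.mem_setOf_eq, Set.mem_preimage]
    constructor
    · rintro ⟨-, ⟨c, hc, rfl⟩, hzc⟩
      have hmem : z - τ c ∈ Λ :=
        QuotientAddGroup.eq_iff_sub_mem.mp hzc.symm
      refine ⟨c, hc, z - τ c, by rw [← hΛ]; exact hmem, by abel⟩
    · rintro ⟨c, hc, x, hx, rfl⟩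
      rw [← hΛ] at hx
      refine ⟨τ c, ⟨c, hc, rfl⟩, ?_⟩
      show π (τ c) = π (τ c + x)
      have hxz : π x = 0 := (QuotientAddGroup.eq_zero_iff x).mpr hx
      rw [map_add, hxz, add_zero]
  · -- discreteness
    haveI := hΛd
    have hbase : ∀ x : EuclideanSpace ℝ (Fin n × PackIdx s t),
        Disjoint (nhdsWithin x {x}ᶜ) (Filter.principal (Λ : Set (EuclideanSpace ℝ (Fin n × PackIdx s t)))) := by
      have h1 : IsClosed (Λ : Set (EuclideanSpace ℝ (Fin n × PackIdx s t))) :=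
        AddSubgroup.isClosed_of_discrete
      have h2 : DiscreteTopology ((Λ : Set (EuclideanSpace ℝ (Fin n × PackIdx s t))) :
          Type _) := hΛd
      exact isClosed_and_discrete_iff.mp ⟨h1, ⟨h2⟩⟩
    have hfiber : ∀ (g : EuclideanSpace ℝ (Fin n × PackIdx s t) ⧸ Λ)
        (x : EuclideanSpace ℝ (Fin n × PackIdx s t)),
        Disjoint (nhdsWithin x {x}ᶜ) (Filter.principal (⇑π ⁻¹' {g})) := by
      intro g x
      obtain ⟨v, rfl⟩ := QuotientAddGroup.mk'_surjective Λ g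
      set e : EuclideanSpace ℝ (Fin n × PackIdx s t) ≃ₜ EuclideanSpace ℝ (Fin n × PackIdx s t) :=
        Homeomorph.addRight v with hedef
      have hset : ⇑π ⁻¹' {π v} = ⇑e '' (Λ : Set (EuclideanSpace ℝ (Fin n × PackIdx s t))) := by
        ext z
        simp only [Set.mem_preimage, Set.mem_singleton_iff, Set.mem_image, SetLike.mem_coe,
          hedef, Homeomorph.coe_addRight]
        constructor
        · intro h
          exact ⟨z - v, QuotientAddGroup.eq_iff_sub_mem.mp h, by abel⟩
        · rintro ⟨y, hy, rfl⟩
          exact QuotientAddGroup.eq_iff_sub_mem.mpr (by simpa using hy)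
      rw [hset, ← Filter.map_principal]
      have h2 : nhdsWithin x {x}ᶜ = Filter.map e (nhdsWithin (x - v) {x - v}ᶜ) := by
        rw [Homeomorph.map_punctured_nhds_eq]
        congr 1
        · simp [hedef]
        · simp [hedef]
      rw [h2]
      exact (Filter.disjoint_map e.injective).mpr (hbase (x - v))
    have key : ∀ T' : Set (EuclideanSpace ℝ (Fin n × PackIdx s t) ⧸ Λ), T'.Finite →
        ∀ x : EuclideanSpace ℝ (Fin n × PackIdx s t),
        Disjoint (nhdsWithin x {x}ᶜ) (Filter.principal (⇑π ⁻¹' T')) := by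
      intro T' hT'
      induction T', hT' using Set.Finite.induction_on with
      | empty => intro x; simp
      | insert hg hfin ih =>
        intro x
        rw [Set.insert_eq, Set.preimage_union, ← Filter.sup_principal]
        exact disjoint_sup_right.mpr ⟨hfiber _ x, ih x⟩
    exact (isClosed_and_discrete_iff.mpr (fun x => key T hTfin x)).2.to_subtype


end
end

section
/- Let p be a nonzero prime ideal of O_K with absolute norm N(p) = q and let ℓ ≥ 1. Let P be a subset of L_ℓ^n, and let 𝒞 = {C_i}_{i=0}^{ℓ-1} be a family of q-ary codes where C_i is an (n, M_i, d_{C_i})-code over the alphabet set S_i containing the zero codeword and d_{C_i} ≥ ⌈ d_E(P)² / d_E(L_i)² ⌉ for each 0 ≤ i ≤ ℓ-1. Then the packing density of τ(𝒞) + P as a packing in ℝ^{mn} is at least Δ(P)·∏_{i=0}^{ℓ-1} M_i. -/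
open scoped BigOperators
open MeasureTheory

noncomputable section

/-! ### Auxiliary lemmas for statement9 -/

set_option maxHeartbeats 1000000


open NumberField Filter Metric
open scoped ENNReal

section Pk9Aux

lemma pk9_normsq_eq {ι : Type*} [Fintype ι] (v : EuclideanSpace ℝ ι) :
    ‖v‖ ^ 2 = ∑ i, (v i) ^ 2 := by
  rw [EuclideanSpace.norm_eq, Real.sq_sqrt (by positivity)]
  simp [Real.norm_eq_abs, sq_abs]

variable {K : Type*} [Field K] {s t : ℕ}
variable (ρ : Fin s → (K →+* ℝ)) (σ : Fin t → (K →+* ℂ))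

/-- Coordinates of the canonical embedding, as additive monoid homs. -/
def pk9_tauCoord (i : PackIdx s t) : K →+ ℝ where
  toFun α := tauEmb ρ σ α i
  map_zero' := by rcases i with i | ⟨j, k⟩ <;> simp [tauEmb]
  map_add' a b := by
    rcases i with i | ⟨j, k⟩ <;> simp [tauEmb, mul_add] <;> split <;> simp [mul_add]

lemma pk9_tauCoord_apply (i : PackIdx s t) (α : K) :
    pk9_tauCoord ρ σ i α = tauEmb ρ σ α i := rfl

lemma pk9_tau_zero : tauEmb ρ σ (0 : K) = 0 := by
  ext i; exact map_zero (pk9_tauCoord ρ σ i)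

lemma pk9_tau_sub (α β : K) : tauEmb ρ σ (α - β) = tauEmb ρ σ α - tauEmb ρ σ β := by
  ext i; exact map_sub (pk9_tauCoord ρ σ i) α β

lemma pk9_phi_norm_le (hemb : Function.Surjective (embSystem ρ σ)) (φ : K →+* ℂ) (x : K) :
    ‖φ x‖ ≤ ‖tauEmb ρ σ x‖ := by
  obtain ⟨idx, rfl⟩ := hemb φ
  have h2 : ‖tauEmb ρ σ x‖ ^ 2 = ∑ i, (tauEmb ρ σ x i) ^ 2 := pk9_normsq_eq _
  rw [← Real.sqrt_sq (norm_nonneg ((embSystem ρ σ idx) x)),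
    ← Real.sqrt_sq (norm_nonneg (tauEmb ρ σ x))]
  apply Real.sqrt_le_sqrt
  rw [h2]
  rcases idx with i | ⟨j, k⟩
  · have : ‖(embSystem ρ σ (Sum.inl i)) x‖ ^ 2 = (tauEmb ρ σ x (Sum.inl i)) ^ 2 := by
      simp [embSystem, tauEmb, Complex.norm_real, Real.norm_eq_abs, sq_abs]
    rw [this]
    exact Finset.single_le_sum (f := fun i => (tauEmb ρ σ x i) ^ 2)
      (fun i _ => by positivity) (Finset.mem_univ _)
  · have key : ‖(embSystem ρ σ (Sum.inr (j, k))) x‖ ^ 2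
        ≤ (tauEmb ρ σ x (Sum.inr (j, 0))) ^ 2 + (tauEmb ρ σ x (Sum.inr (j, 1))) ^ 2 := by
      have habs : ‖(embSystem ρ σ (Sum.inr (j, k))) x‖ ^ 2
          = (σ j x).re ^ 2 + (σ j x).im ^ 2 := by
        simp only [embSystem, Sum.elim_inr]
        split <;>
        · simp [Complex.sq_norm, Complex.normSq_apply]; ring
      have h2' : (0:ℝ) ≤ 2 := by norm_num
      have hc : (tauEmb ρ σ x (Sum.inr (j, 0))) ^ 2 + (tauEmb ρ σ x (Sum.inr (j, 1))) ^ 2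
          = 2 * (σ j x).re ^ 2 + 2 * (σ j x).im ^ 2 := by
        simp [tauEmb, mul_pow, Real.sq_sqrt h2']
        try ring
      rw [habs, hc]; nlinarith [sq_nonneg (σ j x).re, sq_nonneg (σ j x).im]
    refine key.trans ?_
    calc (tauEmb ρ σ x (Sum.inr (j, 0))) ^ 2 + (tauEmb ρ σ x (Sum.inr (j, 1))) ^ 2
        = ∑ i ∈ ({Sum.inr (j,0), Sum.inr (j,1)} : Finset (PackIdx s t)),
            (tauEmb ρ σ x i) ^ 2 := by rw [Finset.sum_pair (by simp)]
      _ ≤ ∑ i, (tauEmb ρ σ x i) ^ 2 :=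
          Finset.sum_le_sum_of_subset_of_nonneg (Finset.subset_univ _)
            (fun i _ _ => by positivity)

variable [NumberField K]

lemma pk9_exists_phi_one_le (a : 𝓞 K) (ha : a ≠ 0) :
    ∃ φ : K →+* ℂ, 1 ≤ ‖φ (algebraMap (𝓞 K) K a)‖ := by
  have hnorm : (1 : ℝ) ≤ |(Algebra.norm ℚ (algebraMap (𝓞 K) K a) : ℚ)| := by
    rw [← Algebra.coe_norm_int, ← Int.cast_one, ← Int.cast_abs]
    have := Int.one_le_abs (Algebra.norm_ne_zero_iff.mpr ha)
    exact_mod_cast this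
  by_contra h
  push_neg at h
  have hprod : ∏ φ : K →+* ℂ, ‖φ (algebraMap (𝓞 K) K a)‖ < 1 := by
    have hne : (Finset.univ : Finset (K →+* ℂ)).Nonempty := by
      rw [← Finset.card_pos, Finset.card_univ, NumberField.Embeddings.card K ℂ]
      exact Module.finrank_pos
    calc ∏ φ : K →+* ℂ, ‖φ (algebraMap (𝓞 K) K a)‖
        < ∏ _φ : K →+* ℂ, (1:ℝ) := by
          apply Finset.prod_lt_prod_of_nonempty _ (fun φ _ => h φ) hne
          intro φ _
          have : algebraMap (𝓞 K) K a ≠ 0 := by simpa using ha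
          exact norm_pos_iff.mpr ((map_ne_zero φ).mpr this)
      _ = 1 := by simp
  have heq : ∏ φ : K →+* ℂ, ‖φ (algebraMap (𝓞 K) K a)‖
      = |(Algebra.norm ℚ (algebraMap (𝓞 K) K a) : ℚ)| := by
    have h1 := Algebra.norm_eq_prod_embeddings ℚ ℂ (algebraMap (𝓞 K) K a)
    have h2 := congrArg (fun z : ℂ => ‖z‖) h1
    rw [norm_prod] at h2
    have h3 : ‖(algebraMap ℚ ℂ (Algebra.norm ℚ (algebraMap (𝓞 K) K a)))‖
        = |(Algebra.norm ℚ (algebraMap (𝓞 K) K a) : ℚ)| := by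
      rw [show (algebraMap ℚ ℂ) (Algebra.norm ℚ (algebraMap (𝓞 K) K a))
          = ((Algebra.norm ℚ (algebraMap (𝓞 K) K a) : ℚ) : ℂ) from rfl]
      rw [← Complex.ofReal_ratCast, Complex.norm_real, Real.norm_eq_abs, Rat.cast_abs]
    rw [h3] at h2
    rw [h2]
    rw [← Fintype.prod_equiv (RingHom.equivRatAlgHom K ℂ)
      (fun φ : K →+* ℂ => ‖φ (algebraMap (𝓞 K) K a)‖)
      (fun f : K →ₐ[ℚ] ℂ => ‖f (algebraMap (𝓞 K) K a)‖)
      (fun φ => rfl)]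
  rw [heq] at hprod
  exact absurd hnorm (by linarith)

lemma pk9_one_le_tau (hemb : Function.Surjective (embSystem ρ σ)) (a : 𝓞 K) (ha : a ≠ 0) :
    1 ≤ ‖tauEmb ρ σ (algebraMap (𝓞 K) K a)‖ := by
  obtain ⟨φ, hφ⟩ := pk9_exists_phi_one_le a ha
  exact hφ.trans (pk9_phi_norm_le ρ σ hemb φ _)

lemma pk9_minDist_nonneg {E : Type*} [MetricSpace E] (P : Set E) : 0 ≤ minDist P :=
  Real.sInf_nonneg (by rintro d ⟨x, _, y, _, _, rfl⟩; exact dist_nonneg)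

lemma pk9_minDist_le_dist {E : Type*} [MetricSpace E] {P : Set E} {x y : E}
    (hx : x ∈ P) (hy : y ∈ P) (hxy : x ≠ y) : minDist P ≤ dist x y :=
  csInf_le ⟨0, by rintro d ⟨a, _, b, _, _, rfl⟩; exact dist_nonneg⟩
    ⟨x, hx, y, hy, hxy, rfl⟩

lemma pk9_one_le_minDist_idealImage (hemb : Function.Surjective (embSystem ρ σ))
    (I : Ideal (𝓞 K)) (hI : I ≠ ⊥) : 1 ≤ minDist (idealImage ρ σ I) := by
  obtain ⟨w, hwI, hw0⟩ := (Submodule.ne_bot_iff I).mp hI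
  have hdistge : ∀ d ∈ {d : ℝ | ∃ x ∈ idealImage ρ σ I, ∃ y ∈ idealImage ρ σ I,
      x ≠ y ∧ dist x y = d}, 1 ≤ d := by
    rintro d ⟨x, ⟨a, haI, rfl⟩, y, ⟨b, hbI, rfl⟩, hxy, rfl⟩
    have hab : a ≠ b := fun h => hxy (by rw [h])
    have : dist (tauEmb ρ σ (algebraMap (𝓞 K) K a)) (tauEmb ρ σ (algebraMap (𝓞 K) K b))
        = ‖tauEmb ρ σ (algebraMap (𝓞 K) K (a - b))‖ := by
      rw [dist_eq_norm, map_sub, pk9_tau_sub]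
    rw [this]
    exact pk9_one_le_tau ρ σ hemb _ (sub_ne_zero.mpr hab)
  apply le_csInf
  · refine ⟨‖tauEmb ρ σ (algebraMap (𝓞 K) K w)‖, tauEmb ρ σ (algebraMap (𝓞 K) K w),
      ⟨w, hwI, rfl⟩, 0, ⟨0, I.zero_mem, by simp [pk9_tau_zero]⟩, ?_, by simp⟩
    intro h
    have h1 := pk9_one_le_tau ρ σ hemb w hw0
    rw [h] at h1
    simp at h1; linarith
  · exact hdistge

/-- Elements of `𝓞 K` with bounded canonical embedding form a finite set. -/
lemma pk9_finite_tau_le (hemb : Function.Surjective (embSystem ρ σ)) (R : ℝ) :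
    {a : 𝓞 K | ‖tauEmb ρ σ (algebraMap (𝓞 K) K a)‖ ≤ R}.Finite := by
  apply Set.Finite.of_finite_image (f := fun a : 𝓞 K => algebraMap (𝓞 K) K a)
  · apply Set.Finite.subset (NumberField.Embeddings.finite_of_norm_le K ℂ R)
    rintro x ⟨a, ha, rfl⟩
    exact ⟨NumberField.RingOfIntegers.isIntegral_coe a,
      fun φ => (pk9_phi_norm_le ρ σ hemb φ _).trans ha⟩
  · exact Set.injOn_of_injective (NumberField.RingOfIntegers.coe_injective)

end Pk9Aux

/-- The generic ball-packing bound: the density integrand is at most 1. -/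
lemma pk9_density_le_one {ι : Type*} [Fintype ι] [Nonempty ι]
    (A : Set (EuclideanSpace ℝ ι))
    (hfin : ∀ R : ℝ, (A ∩ Metric.closedBall 0 R).Finite) (R : ℝ) :
    (Nat.card ↥(A ∩ Metric.closedBall 0 R) : ℝ) * (minDist A / 2) ^ (Fintype.card ι)
      * unitBallVol ι
      / (volume (Metric.closedBall (0 : EuclideanSpace ℝ ι) (R + minDist A / 2))).toReal
      ≤ 1 := by
  set r := minDist A / 2 with hr_def
  have hr : 0 ≤ r := by
    have := pk9_minDist_nonneg A; rw [hr_def]; linarith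
  set F := (hfin R).toFinset with hF_def
  have hdisj : (↑F : Set (EuclideanSpace ℝ ι)).PairwiseDisjoint
      (fun z => Metric.ball z r) := by
    intro x hx y hy hxy
    simp only [hF_def, Set.Finite.coe_toFinset] at hx hy
    apply Metric.ball_disjoint_ball
    have := pk9_minDist_le_dist hx.1 hy.1 hxy
    rw [hr_def]; linarith
  have hmeas := measure_biUnion_finset (μ := volume) hdisj
    (fun z _ => (Metric.isOpen_ball).measurableSet)
  have hsub : (⋃ z ∈ F, Metric.ball z r)
      ⊆ Metric.closedBall (0 : EuclideanSpace ℝ ι) (R + r) := by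
    intro w hw
    simp only [Set.mem_iUnion] at hw
    obtain ⟨z, hz, hwz⟩ := hw
    simp only [hF_def, Set.Finite.mem_toFinset] at hz
    rw [Metric.mem_closedBall]
    have h1 : dist w z < r := Metric.mem_ball.mp hwz
    have h2 : dist z 0 ≤ R := Metric.mem_closedBall.mp hz.2
    calc dist w 0 ≤ dist w z + dist z 0 := dist_triangle _ _ _
      _ ≤ R + r := by linarith
  have hball : ∀ z : EuclideanSpace ℝ ι, volume (Metric.ball z r)
      = ENNReal.ofReal (r ^ Fintype.card ι) * volume (Metric.ball (0 : EuclideanSpace ℝ ι) 1) := by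
    intro z
    rw [Measure.addHaar_ball _ _ hr, finrank_euclideanSpace]
  have hkey : (F.card : ℝ≥0∞) * (ENNReal.ofReal (r ^ Fintype.card ι)
      * volume (Metric.ball (0 : EuclideanSpace ℝ ι) 1))
      ≤ volume (Metric.closedBall (0 : EuclideanSpace ℝ ι) (R + r)) := by
    calc (F.card : ℝ≥0∞) * (ENNReal.ofReal (r ^ Fintype.card ι)
          * volume (Metric.ball (0 : EuclideanSpace ℝ ι) 1))
        = ∑ z ∈ F, volume (Metric.ball z r) := by
          rw [Finset.sum_congr rfl (fun z _ => hball z), Finset.sum_const, nsmul_eq_mul]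
      _ = volume (⋃ z ∈ F, Metric.ball z r) := hmeas.symm
      _ ≤ _ := measure_mono hsub
  have hfin_cb : volume (Metric.closedBall (0 : EuclideanSpace ℝ ι) (R + r)) ≠ ⊤ :=
    measure_closedBall_lt_top.ne
  have htoReal : (F.card : ℝ) * (r ^ Fintype.card ι * unitBallVol ι)
      ≤ (volume (Metric.closedBall (0 : EuclideanSpace ℝ ι) (R + r))).toReal := by
    have h1 := ENNReal.toReal_mono hfin_cb hkey
    rw [ENNReal.toReal_mul, ENNReal.toReal_mul,
      ENNReal.toReal_ofReal (by positivity : (0:ℝ) ≤ r ^ Fintype.card ι)] at h1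
    simpa [unitBallVol] using h1
  have hcard : (Nat.card ↥(A ∩ Metric.closedBall 0 R) : ℝ) = (F.card : ℝ) := by
    norm_cast
    rw [Nat.card_coe_set_eq, Set.ncard_eq_toFinset_card _ (hfin R)]
  rcases eq_or_lt_of_le (ENNReal.toReal_nonneg :
      (0:ℝ) ≤ (volume (Metric.closedBall (0 : EuclideanSpace ℝ ι) (R + r))).toReal) with h0 | h0
  · rw [← h0, div_zero]; norm_num
  · rw [div_le_one h0, hcard]
    calc (F.card : ℝ) * r ^ Fintype.card ι * unitBallVol ι
        = (F.card : ℝ) * (r ^ Fintype.card ι * unitBallVol ι) := by ring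
      _ ≤ _ := htoReal



/-- The key separation estimate for the multilevel construction. -/
lemma pk9_key_dist {K : Type*} [Field K] [NumberField K] {s t : ℕ}
    (ρ : Fin s → (K →+* ℝ)) (σ : Fin t → (K →+* ℂ))
    (hemb : Function.Surjective (embSystem ρ σ))
    {n ℓ : ℕ} (p : Ideal (NumberField.RingOfIntegers K)) (hpbot : p ≠ ⊥)
    (S : ℕ → Set (NumberField.RingOfIntegers K))
    (hSsub : ∀ i : Fin ℓ, S i ⊆ (p ^ (i : ℕ) : Ideal (NumberField.RingOfIntegers K)))
    (hSsep : ∀ i : Fin ℓ, ∀ x ∈ S (i : ℕ), ∀ y ∈ S (i : ℕ), x ≠ y →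
      x - y ∉ (p ^ ((i : ℕ) + 1) : Ideal (NumberField.RingOfIntegers K)))
    (C : Fin ℓ → Set (Fin n → NumberField.RingOfIntegers K))
    (hCS : ∀ i : Fin ℓ, ∀ c ∈ C i, ∀ j, c j ∈ S (i : ℕ))
    (d : Fin ℓ → ℕ) (hCd : ∀ i, codeMinDist (C i) = d i)
    (P : Set (EuclideanSpace ℝ (Fin n × PackIdx s t)))
    (hP : P ⊆ prodSet n (idealImage ρ σ (p ^ ℓ)))
    (hd : ∀ i : Fin ℓ,
      ⌈(minDist P) ^ 2 / (minDist (idealImage ρ σ (p ^ (i : ℕ)))) ^ 2⌉₊ ≤ d i)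
    (c c' : Fin ℓ → Fin n → NumberField.RingOfIntegers K)
    (hc : ∀ i, c i ∈ C i) (hc' : ∀ i, c' i ∈ C i)
    (x x' : EuclideanSpace ℝ (Fin n × PackIdx s t)) (hx : x ∈ P) (hx' : x' ∈ P)
    (hne : c ≠ c' ∨ x ≠ x') :
    minDist P ≤ dist
      ((∑ i : Fin ℓ, tauEmbN ρ σ fun j => algebraMap (NumberField.RingOfIntegers K) K (c i j)) + x)
      ((∑ i : Fin ℓ, tauEmbN ρ σ fun j =>
        algebraMap (NumberField.RingOfIntegers K) K (c' i j)) + x') := by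
  classical
  set ι := algebraMap (NumberField.RingOfIntegers K) K with hι
  by_cases hcc : c = c'
  · subst hcc
    have hxx : x ≠ x' := hne.resolve_left (by simp)
    rw [dist_add_left]
    exact pk9_minDist_le_dist hx hx' hxx
  · -- the two codeword families differ
    set Z₁ := (∑ i : Fin ℓ, tauEmbN ρ σ fun j => ι (c i j)) + x with hZ₁
    set Z₂ := (∑ i : Fin ℓ, tauEmbN ρ σ fun j => ι (c' i j)) + x' with hZ₂
    have hℓpos : 0 < ℓ := by
      rcases Function.ne_iff.mp hcc with ⟨i, _⟩
      exact i.pos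
    set Fs := Finset.univ.filter (fun i : Fin ℓ => c i ≠ c' i) with hFs
    have hFsne : Fs.Nonempty := by
      rcases Function.ne_iff.mp hcc with ⟨i, hi⟩
      exact ⟨i, by simp [hFs, hi]⟩
    set i₀ := Fs.min' hFsne with hi₀def
    have hi₀ : c i₀ ≠ c' i₀ := (Finset.mem_filter.mp (Fs.min'_mem hFsne)).2
    have hmin : ∀ i : Fin ℓ, i < i₀ → c i = c' i := by
      intro i hlt
      by_contra h
      exact absurd (Fs.min'_le i (by simp [hFs, h])) (not_le.mpr hlt)
    -- block representatives of x and x'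
    choose a ha hta using fun j => (hP hx j)
    choose a' ha' hta' using fun j => (hP hx' j)
    have hxcoord : ∀ (j : Fin n) (i : PackIdx s t), x (j, i) = tauEmb ρ σ (ι (a j)) i :=
      fun j i => (congrArg (fun v : EuclideanSpace ℝ (PackIdx s t) => v i) (hta j)).symm
    have hxcoord' : ∀ (j : Fin n) (i : PackIdx s t), x' (j, i) = tauEmb ρ σ (ι (a' j)) i :=
      fun j i => (congrArg (fun v : EuclideanSpace ℝ (PackIdx s t) => v i) (hta' j)).symm
    set β : Fin n → NumberField.RingOfIntegers K :=
      fun j => (∑ i : Fin ℓ, (c i j - c' i j)) + (a j - a' j) with hβdef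
    have hz : ∀ (j : Fin n) (i : PackIdx s t), (Z₁ - Z₂) (j, i) = tauEmb ρ σ (ι (β j)) i := by
      intro j i
      have h1 : (Z₁ - Z₂) (j, i)
          = ((∑ k : Fin ℓ, tauEmb ρ σ (ι (c k j)) i) + x (j, i))
            - ((∑ k : Fin ℓ, tauEmb ρ σ (ι (c' k j)) i) + x' (j, i)) := by
        have e1 : (∑ k : Fin ℓ, tauEmbN ρ σ fun j' => ι (c k j')) (j, i)
            = ∑ k : Fin ℓ, tauEmb ρ σ (ι (c k j)) i := by
          rw [WithLp.ofLp_sum]; exact Finset.sum_apply (j, i) Finset.univ _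
        have e2 : (∑ k : Fin ℓ, tauEmbN ρ σ fun j' => ι (c' k j')) (j, i)
            = ∑ k : Fin ℓ, tauEmb ρ σ (ι (c' k j)) i := by
          rw [WithLp.ofLp_sum]; exact Finset.sum_apply (j, i) Finset.univ _
        show ((∑ k : Fin ℓ, tauEmbN ρ σ fun j' => ι (c k j')) + x) (j, i)
            - ((∑ k : Fin ℓ, tauEmbN ρ σ fun j' => ι (c' k j')) + x') (j, i) = _
        rw [show ∀ (u v : EuclideanSpace ℝ (Fin n × PackIdx s t)) (q : Fin n × PackIdx s t),
          (u + v) q = u q + v q from fun _ _ _ => rfl, e1]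
        rw [show ∀ (u v : EuclideanSpace ℝ (Fin n × PackIdx s t)) (q : Fin n × PackIdx s t),
          (u + v) q = u q + v q from fun _ _ _ => rfl, e2]
      rw [h1, hxcoord j i, hxcoord' j i]
      have h2 : tauEmb ρ σ (ι (β j)) i = pk9_tauCoord ρ σ i (ι (β j)) := rfl
      rw [h2]
      simp only [hβdef, map_add, map_sub, map_sum]
      rw [Finset.sum_sub_distrib]
      simp only [pk9_tauCoord_apply]
      ring
    -- βⱼ lies in p^i₀, and is a nonzero element outside p^(i₀+1) whenever the codewords differ
    have hβmem : ∀ j, β j ∈ (p ^ (i₀ : ℕ) : Ideal (NumberField.RingOfIntegers K)) := by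
      intro j
      apply Ideal.add_mem
      · apply Ideal.sum_mem
        intro k _
        rcases lt_or_ge k i₀ with hlt | hge
        · rw [hmin k hlt]; simp
        · exact (Ideal.pow_le_pow_right (by exact_mod_cast hge))
            (sub_mem (hSsub k (hCS k _ (hc k) j)) (hSsub k (hCS k _ (hc' k) j)))
      · exact (Ideal.pow_le_pow_right (le_of_lt i₀.isLt)) (sub_mem (ha j) (ha' j))
    have hγ : ∀ j, β j - (c i₀ j - c' i₀ j)
        ∈ (p ^ ((i₀ : ℕ) + 1) : Ideal (NumberField.RingOfIntegers K)) := by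
      intro j
      have hsum : β j - (c i₀ j - c' i₀ j)
          = (∑ k ∈ Finset.univ.erase i₀, (c k j - c' k j)) + (a j - a' j) := by
        simp only [hβdef]
        rw [← Finset.add_sum_erase Finset.univ (fun k : Fin ℓ => c k j - c' k j)
          (Finset.mem_univ i₀)]
        ring
      rw [hsum]
      apply Ideal.add_mem
      · apply Ideal.sum_mem
        intro k hk
        have hkne : k ≠ i₀ := Finset.ne_of_mem_erase hk
        rcases lt_or_ge k i₀ with hlt | hge
        · rw [hmin k hlt]; simp
        · have hgt : (i₀ : ℕ) + 1 ≤ (k : ℕ) := by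
            have : i₀ < k := lt_of_le_of_ne hge (Ne.symm hkne)
            exact Nat.succ_le_of_lt (by exact_mod_cast this)
          exact (Ideal.pow_le_pow_right hgt)
            (sub_mem (hSsub k (hCS k _ (hc k) j)) (hSsub k (hCS k _ (hc' k) j)))
      · exact (Ideal.pow_le_pow_right (Nat.succ_le_of_lt i₀.isLt)) (sub_mem (ha j) (ha' j))
    set J := Finset.univ.filter (fun j : Fin n => c i₀ j ≠ c' i₀ j) with hJdef
    have hβne : ∀ j ∈ J, β j ∉ (p ^ ((i₀ : ℕ) + 1) : Ideal (NumberField.RingOfIntegers K)) := by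
      intro j hj hmem
      have h1 : c i₀ j - c' i₀ j ∈ (p ^ ((i₀ : ℕ) + 1) : Ideal (NumberField.RingOfIntegers K)) := by
        have := Ideal.sub_mem _ hmem (hγ j)
        simpa using this
      exact hSsep i₀ _ (hCS i₀ _ (hc i₀) j) _ (hCS i₀ _ (hc' i₀) j)
        (by simpa [hJdef] using hj) h1
    have hβ0 : ∀ j ∈ J, β j ≠ 0 := by
      intro j hj h0
      exact hβne j hj (h0 ▸ Ideal.zero_mem _)
    set b := minDist (idealImage ρ σ (p ^ (i₀ : ℕ))) with hbdef
    have hppow : (p ^ (i₀ : ℕ) : Ideal (NumberField.RingOfIntegers K)) ≠ ⊥ := by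
      obtain ⟨w, hwp, hw0⟩ := (Submodule.ne_bot_iff p).mp hpbot
      exact (Submodule.ne_bot_iff _).mpr
        ⟨w ^ (i₀ : ℕ), Ideal.pow_mem_pow hwp _, pow_ne_zero _ hw0⟩
    have hb1 : 1 ≤ b := pk9_one_le_minDist_idealImage ρ σ hemb _ hppow
    have hblock : ∀ j ∈ J, b ≤ ‖tauEmb ρ σ (ι (β j))‖ := by
      intro j hj
      have h1 : 1 ≤ ‖tauEmb ρ σ (ι (β j))‖ := pk9_one_le_tau ρ σ hemb _ (hβ0 j hj)
      have hmem : tauEmb ρ σ (ι (β j)) ∈ idealImage ρ σ (p ^ (i₀ : ℕ)) := ⟨β j, hβmem j, rfl⟩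
      have h0mem : (0 : EuclideanSpace ℝ (PackIdx s t)) ∈ idealImage ρ σ (p ^ (i₀ : ℕ)) :=
        ⟨0, Ideal.zero_mem _, by simp [pk9_tau_zero]⟩
      have hne0 : tauEmb ρ σ (ι (β j)) ≠ 0 := by
        intro h
        rw [h] at h1; simp at h1; linarith
      have := pk9_minDist_le_dist hmem h0mem hne0
      rwa [dist_zero_right] at this
    -- Hamming distance bound
    have hJd : d i₀ ≤ J.card := by
      have h1 : codeMinDist (C i₀) ≤ hDist (c i₀) (c' i₀) :=
        Nat.sInf_le ⟨c i₀, hc i₀, c' i₀, hc' i₀, hi₀, rfl⟩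
      have h2 : hDist (c i₀) (c' i₀) = J.card := by
        rw [hDist, Nat.card_eq_fintype_card, Fintype.card_subtype]
      rw [hCd i₀] at h1
      omega
    -- the ceiling estimate
    have hbpos : (0 : ℝ) < b ^ 2 := by nlinarith
    have hceil : (minDist P) ^ 2 ≤ (d i₀ : ℝ) * b ^ 2 := by
      have h1 : (minDist P) ^ 2 / b ^ 2 ≤ (⌈(minDist P) ^ 2 / b ^ 2⌉₊ : ℝ) := Nat.le_ceil _
      have h2 : ((⌈(minDist P) ^ 2 / b ^ 2⌉₊ : ℕ) : ℝ) ≤ (d i₀ : ℝ) := by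
        exact_mod_cast hd i₀
      rw [div_le_iff₀ hbpos] at h1
      nlinarith
    -- summation
    have hz2 : ‖Z₁ - Z₂‖ ^ 2 = ∑ j : Fin n, ‖tauEmb ρ σ (ι (β j))‖ ^ 2 := by
      rw [pk9_normsq_eq, Fintype.sum_prod_type]
      exact Finset.sum_congr rfl fun j _ => by
        rw [pk9_normsq_eq]
        exact Finset.sum_congr rfl fun i _ => by rw [hz j i]
    have hb0 : (0 : ℝ) ≤ b := by linarith
    have hsum_ge : (J.card : ℝ) * b ^ 2 ≤ ∑ j : Fin n, ‖tauEmb ρ σ (ι (β j))‖ ^ 2 := by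
      calc (J.card : ℝ) * b ^ 2 = ∑ _j ∈ J, b ^ 2 := by
            rw [Finset.sum_const, nsmul_eq_mul]
        _ ≤ ∑ j ∈ J, ‖tauEmb ρ σ (ι (β j))‖ ^ 2 := by
            apply Finset.sum_le_sum
            intro j hj
            have := hblock j hj
            nlinarith
        _ ≤ ∑ j : Fin n, ‖tauEmb ρ σ (ι (β j))‖ ^ 2 :=
            Finset.sum_le_sum_of_subset_of_nonneg (Finset.subset_univ _)
              (fun j _ _ => by positivity)
    have hfinal : (minDist P) ^ 2 ≤ ‖Z₁ - Z₂‖ ^ 2 := by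
      rw [hz2]
      have hcast : (d i₀ : ℝ) ≤ (J.card : ℝ) := by exact_mod_cast hJd
      nlinarith
    rw [dist_eq_norm]
    have hmp : 0 ≤ minDist P := pk9_minDist_nonneg P
    calc minDist P = Real.sqrt ((minDist P) ^ 2) := (Real.sqrt_sq hmp).symm
      _ ≤ Real.sqrt (‖Z₁ - Z₂‖ ^ 2) := Real.sqrt_le_sqrt hfinal
      _ = ‖Z₁ - Z₂‖ := Real.sqrt_sq (norm_nonneg _)


/-- Concatenation with a family of codes: if each `C_i` has minimum Hamming
distance at least `⌈d_E(P)²/d_E(L_i)²⌉`, then `Δ(τ(𝒞)+P) ≥ Δ(P)·∏ M_i`. -/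
theorem statement9 {K : Type*} [Field K] [NumberField K] {s t m : ℕ}
    (ρ : Fin s → (K →+* ℝ)) (σ : Fin t → (K →+* ℂ)) (hemb : IsEmbSystem ρ σ)
    (hm : m = s + 2 * t)
    (p : Ideal (NumberField.RingOfIntegers K)) (hp : p.IsPrime) (hp0 : p ≠ ⊥)
    (q : ℕ) (hq : Ideal.absNorm p = q) (ℓ : ℕ) (hℓ : 1 ≤ ℓ) {n : ℕ}
    (S : ℕ → Set (NumberField.RingOfIntegers K)) (hS : ∀ i : Fin ℓ, IsRepSet p i q (S i))
    (M d : Fin ℓ → ℕ) (C : Fin ℓ → Set (Fin n → NumberField.RingOfIntegers K))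
    (hC : ∀ i : Fin ℓ, IsCode (S i) (M i) (d i) (C i))
    (h0C : ∀ i : Fin ℓ, (fun _ => (0 : NumberField.RingOfIntegers K)) ∈ C i)
    (P : Set (EuclideanSpace ℝ (Fin n × PackIdx s t)))
    (hP : P ⊆ prodSet n (idealImage ρ σ (p ^ ℓ)))
    (hd : ∀ i : Fin ℓ,
      ⌈(minDist P) ^ 2 / (minDist (idealImage ρ σ (p ^ (i : ℕ)))) ^ 2⌉₊ ≤ d i) :
    packDensity P * ∏ i : Fin ℓ, (M i : ℝ) ≤ packDensity (famTranslate ρ σ C P) := by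
  classical
  have hSsub : ∀ i : Fin ℓ, S (i : ℕ) ⊆ (p ^ (i : ℕ) : Ideal (NumberField.RingOfIntegers K)) :=
    fun i => (hS i).1
  have hSsep : ∀ i : Fin ℓ, ∀ x ∈ S (i : ℕ), ∀ y ∈ S (i : ℕ), x ≠ y →
      x - y ∉ (p ^ ((i : ℕ) + 1) : Ideal (NumberField.RingOfIntegers K)) :=
    fun i => (hS i).2.2.2.1
  have hCsub : ∀ i : Fin ℓ, ∀ c ∈ C i, ∀ j, c j ∈ S (i : ℕ) := fun i => (hC i).1
  have hCM : ∀ i : Fin ℓ, Nat.card ↥(C i) = M i := fun i => (hC i).2.1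
  have hCd : ∀ i : Fin ℓ, codeMinDist (C i) = d i := fun i => (hC i).2.2
  rcases Nat.eq_zero_or_pos n with hn | hn
  · -- degenerate case n = 0
    subst hn
    haveI : IsEmpty (Fin 0 × PackIdx s t) := inferInstance
    haveI : Subsingleton (EuclideanSpace ℝ (Fin 0 × PackIdx s t)) :=
      ⟨fun a b => PiLp.ext fun i => (IsEmpty.false i).elim⟩
    have hQ : famTranslate ρ σ C P = P := by
      ext z
      constructor
      · rintro ⟨c, hc, x, hxP, rfl⟩
        have : (∑ i : Fin ℓ, tauEmbN ρ σ fun j =>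
            algebraMap (NumberField.RingOfIntegers K) K (c i j)) + x = x :=
          Subsingleton.elim _ _
        rw [this]; exact hxP
      · intro hz
        exact ⟨fun _ => fun j => 0, fun i => h0C i, z, hz, Subsingleton.elim _ _⟩
    have hM : ∀ i : Fin ℓ, M i = 1 := by
      intro i
      rw [← hCM i]
      have hsub : (C i).Subsingleton := by
        intro u _ v _
        funext j
        exact (Fin.elim0 j)
      rw [hsub.eq_singleton_of_mem (h0C i)]
      simp
    have hMone : ∏ i : Fin ℓ, (M i : ℝ) = 1 := by simp [hM]
    rw [hQ, hMone, mul_one]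
  · -- main case n > 0
    haveI hne_pack : Nonempty (PackIdx s t) := by
      have hcard : 0 < Fintype.card (K →+* ℂ) := by
        rw [NumberField.Embeddings.card K ℂ]; exact Module.finrank_pos
      obtain ⟨φ⟩ := Fintype.card_pos_iff.mp hcard
      obtain ⟨idx, -⟩ := hemb.2 φ
      exact ⟨idx⟩
    haveI : Nonempty (Fin n) := ⟨⟨0, hn⟩⟩
    haveI : Nonempty (Fin n × PackIdx s t) := inferInstance
    set Q := famTranslate ρ σ C P with hQdef
    set fP : ℝ → ℝ := fun R =>
      (Nat.card ↥(P ∩ Metric.closedBall 0 R) : ℝ)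
        * (minDist P / 2) ^ (Fintype.card (Fin n × PackIdx s t))
        * unitBallVol (Fin n × PackIdx s t)
        / (volume (Metric.closedBall (0 : EuclideanSpace ℝ (Fin n × PackIdx s t))
            (R + minDist P / 2))).toReal with hfPdef
    set fQ : ℝ → ℝ := fun R =>
      (Nat.card ↥(Q ∩ Metric.closedBall 0 R) : ℝ)
        * (minDist Q / 2) ^ (Fintype.card (Fin n × PackIdx s t))
        * unitBallVol (Fin n × PackIdx s t)
        / (volume (Metric.closedBall (0 : EuclideanSpace ℝ (Fin n × PackIdx s t))
            (R + minDist Q / 2))).toReal with hfQdef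
    have hDP : packDensity P = Filter.limsup fP Filter.atTop := rfl
    have hDQ : packDensity Q = Filter.limsup fQ Filter.atTop := rfl
    have hMp : (0:ℝ) ≤ ∏ i : Fin ℓ, (M i : ℝ) := Finset.prod_nonneg fun i _ => Nat.cast_nonneg _
    have hfP0 : ∀ R, 0 ≤ fP R := by
      intro R
      rw [hfPdef]
      have hm := pk9_minDist_nonneg P
      apply div_nonneg _ ENNReal.toReal_nonneg
      apply mul_nonneg (mul_nonneg (Nat.cast_nonneg _) (by positivity)) ENNReal.toReal_nonneg
    have hfQ0 : ∀ R, 0 ≤ fQ R := by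
      intro R
      rw [hfQdef]
      have hm := pk9_minDist_nonneg Q
      apply div_nonneg _ ENNReal.toReal_nonneg
      apply mul_nonneg (mul_nonneg (Nat.cast_nonneg _) (by positivity)) ENNReal.toReal_nonneg
    have hQnonneg : 0 ≤ packDensity Q := by
      by_cases hbdd : Filter.IsBoundedUnder (· ≤ ·) Filter.atTop fQ
      · rw [hDQ]
        exact Filter.le_limsup_of_frequently_le (Filter.Frequently.of_forall hfQ0) hbdd
      · rw [hDQ, Filter.limsup_eq]
        have hempty : {a : ℝ | ∀ᶠ x in Filter.atTop, fQ x ≤ a} = ∅ := by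
          ext a
          simp only [Set.mem_setOf_eq, Set.mem_empty_iff_false, iff_false]
          intro ha
          exact hbdd ⟨a, by simpa [Filter.eventually_map] using ha⟩
        rw [hempty, Real.sInf_empty]
    rcases eq_or_lt_of_le (pk9_minDist_nonneg P) with hm0 | hmpos
    · -- minDist P = 0
      have hfP : fP = fun _ => (0:ℝ) := by
        have hcard0 : Fintype.card (Fin n × PackIdx s t) ≠ 0 := Fintype.card_ne_zero
        funext R
        simp only [hfPdef]
        rw [← hm0]
        simp only [zero_div]
        simp
        refine Or.inl (Or.inl (Or.inr ⟨by omega, ?_⟩))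
        intro hs ht
        rcases hne_pack with ⟨idx⟩
        rcases idx with i | pr
        · subst hs; exact Fin.elim0 i
        · subst ht; exact Fin.elim0 pr.1
      have hlhs : packDensity P = 0 := by
        rw [hDP, hfP]
        exact Filter.limsup_const 0
      rw [hlhs, zero_mul]
      exact hQnonneg
    · -- 0 < minDist P
      -- finiteness of S i and C i
      have hq1 : 1 ≤ q := by
        rcases Nat.eq_zero_or_pos q with h | h
        · exact absurd (Ideal.absNorm_eq_zero_iff.mp (by rw [hq, h])) hp0
        · exact h
      have hSfin : ∀ i : Fin ℓ, (S (i : ℕ)).Finite := by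
        intro i
        have hcard := (hS i).2.2.1
        have hne0 : Nat.card ↥(S (i : ℕ)) ≠ 0 := by omega
        rcases Nat.card_ne_zero.mp hne0 with ⟨_, hfin⟩
        exact Set.finite_coe_iff.mp hfin
      have hCfin : ∀ i : Fin ℓ, (C i).Finite := by
        intro i
        apply Set.Finite.subset (Set.Finite.pi (fun _ : Fin n => hSfin i))
        intro cc hcc
        rw [Set.mem_pi]
        exact fun j _ => hCsub i cc hcc j
      -- finiteness of the ideal lattice in balls
      have hLfin : ∀ R : ℝ, ({v : EuclideanSpace ℝ (PackIdx s t) |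
          v ∈ idealImage ρ σ (p ^ ℓ) ∧ ‖v‖ ≤ R}).Finite := by
        intro R
        apply Set.Finite.subset (((pk9_finite_tau_le ρ σ hemb.2 R).image
          (fun a : NumberField.RingOfIntegers K =>
            tauEmb ρ σ (algebraMap (NumberField.RingOfIntegers K) K a))))
        rintro v ⟨⟨a, haI, rfl⟩, hvR⟩
        exact ⟨a, hvR, rfl⟩
      -- finiteness of P in balls
      have hPfin : ∀ R : ℝ, (P ∩ Metric.closedBall 0 R).Finite := by
        intro R
        have hmap : ∀ x, x ∈ P ∩ Metric.closedBall 0 R → ∀ j : Fin n,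
            (WithLp.toLp 2 (fun i => x (j, i)) : EuclideanSpace ℝ (PackIdx s t))
              ∈ {v : EuclideanSpace ℝ (PackIdx s t) |
                v ∈ idealImage ρ σ (p ^ ℓ) ∧ ‖v‖ ≤ R} := by
          rintro x ⟨hxP, hxR⟩ j
          have hxnorm : ‖x‖ ≤ R := mem_closedBall_zero_iff.mp hxR
          set y : EuclideanSpace ℝ (PackIdx s t) := WithLp.toLp 2 (fun i => x (j, i)) with hydef
          refine ⟨hP hxP j, ?_⟩
          have h2 : ‖y‖ ^ 2 ≤ ‖x‖ ^ 2 := by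
            calc ‖y‖ ^ 2 = ∑ i, (y i) ^ 2 := pk9_normsq_eq y
              _ = ∑ i, (x (j, i)) ^ 2 := rfl
              _ ≤ ∑ q' : Fin n × PackIdx s t, (x q') ^ 2 := by
                  rw [Fintype.sum_prod_type]
                  exact Finset.single_le_sum
                    (f := fun j' : Fin n => ∑ i, (x (j', i)) ^ 2)
                    (fun _ _ => by positivity) (Finset.mem_univ j)
              _ = ‖x‖ ^ 2 := (pk9_normsq_eq x).symm
          have h3 : ‖y‖ ≤ ‖x‖ := by
            nlinarith [norm_nonneg y, norm_nonneg x]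
          show ‖y‖ ≤ R
          linarith
        haveI : Finite ↥{v : EuclideanSpace ℝ (PackIdx s t) |
            v ∈ idealImage ρ σ (p ^ ℓ) ∧ ‖v‖ ≤ R} := (hLfin R).to_subtype
        apply Set.finite_coe_iff.mp
        apply Finite.of_injective (β := Fin n → ↥{v : EuclideanSpace ℝ (PackIdx s t) |
            v ∈ idealImage ρ σ (p ^ ℓ) ∧ ‖v‖ ≤ R})
          (f := fun x : ↥(P ∩ Metric.closedBall 0 R) =>
            fun j => ⟨WithLp.toLp 2 (fun i => (x : EuclideanSpace ℝ (Fin n × PackIdx s t)) (j, i)),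
              hmap x.1 x.2 j⟩)
        intro x y hxy
        apply Subtype.ext
        ext q'
        obtain ⟨j, i⟩ := q'
        have := congrArg Subtype.val (congrFun hxy j)
        exact congrArg (fun v : EuclideanSpace ℝ (PackIdx s t) => v i) this
      -- bound T on embedded codeword sums
      have hTSfin : ((fun cc : Fin ℓ → (Fin n → NumberField.RingOfIntegers K) =>
          ‖∑ i : Fin ℓ, tauEmbN ρ σ (fun j =>
            algebraMap (NumberField.RingOfIntegers K) K (cc i j))‖) ''
          (Set.pi Set.univ C)).Finite :=
        (Set.Finite.pi (fun i => hCfin i)).image _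
      obtain ⟨T₀, hT₀⟩ := hTSfin.bddAbove
      have hT : ∀ cc : Fin ℓ → Fin n → NumberField.RingOfIntegers K, (∀ i, cc i ∈ C i) →
          ‖∑ i : Fin ℓ, tauEmbN ρ σ (fun j =>
            algebraMap (NumberField.RingOfIntegers K) K (cc i j))‖ ≤ max T₀ 0 := by
        intro cc hcc
        have hmem : ‖∑ i : Fin ℓ, tauEmbN ρ σ (fun j =>
            algebraMap (NumberField.RingOfIntegers K) K (cc i j))‖
            ∈ ((fun cc : Fin ℓ → (Fin n → NumberField.RingOfIntegers K) =>
              ‖∑ i : Fin ℓ, tauEmbN ρ σ (fun j =>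
                algebraMap (NumberField.RingOfIntegers K) K (cc i j))‖) ''
              (Set.pi Set.univ C)) :=
          ⟨cc, by rw [Set.mem_pi]; exact fun i _ => hcc i, rfl⟩
        exact le_trans (hT₀ hmem) (le_max_left _ _)
      set T := max T₀ 0 with hTdef
      have hT0 : 0 ≤ T := le_max_right _ _
      -- P ⊆ Q
      have hPQ : P ⊆ Q := by
        intro z hz
        refine ⟨fun _ => fun _ => 0, fun i => h0C i, z, hz, ?_⟩
        have hzero : ∀ i : Fin ℓ, tauEmbN ρ σ (fun _ : Fin n =>
            algebraMap (NumberField.RingOfIntegers K) K (0 : NumberField.RingOfIntegers K))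
            = (0 : EuclideanSpace ℝ (Fin n × PackIdx s t)) := by
          intro i
          ext q'
          show tauEmb ρ σ (algebraMap (NumberField.RingOfIntegers K) K 0) q'.2 = 0
          rw [map_zero, pk9_tau_zero]
          rfl
        rw [Finset.sum_congr rfl (fun i _ => hzero i)]
        simp
      -- Q finiteness in balls
      have hQfin : ∀ R : ℝ, (Q ∩ Metric.closedBall 0 R).Finite := by
        intro R
        apply Set.Finite.subset (Set.Finite.image2
          (fun (cc : Fin ℓ → Fin n → NumberField.RingOfIntegers K)
            (x : EuclideanSpace ℝ (Fin n × PackIdx s t)) =>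
            (∑ i : Fin ℓ, tauEmbN ρ σ fun j =>
              algebraMap (NumberField.RingOfIntegers K) K (cc i j)) + x)
          (Set.Finite.pi fun i => hCfin i) (hPfin (R + T)))
        rintro z ⟨⟨cc, hcc, x, hxP, rfl⟩, hzR⟩
        apply Set.mem_image2_of_mem
        · rw [Set.mem_pi]; exact fun i _ => hcc i
        · refine ⟨hxP, ?_⟩
          rw [mem_closedBall_zero_iff]
          have hv := hT cc hcc
          have hz' : ‖(∑ i : Fin ℓ, tauEmbN ρ σ fun j =>
              algebraMap (NumberField.RingOfIntegers K) K (cc i j)) + x‖ ≤ R :=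
            mem_closedBall_zero_iff.mp hzR
          have hxe : x = ((∑ i : Fin ℓ, tauEmbN ρ σ fun j =>
              algebraMap (NumberField.RingOfIntegers K) K (cc i j)) + x)
              - (∑ i : Fin ℓ, tauEmbN ρ σ fun j =>
                algebraMap (NumberField.RingOfIntegers K) K (cc i j)) := by abel
          calc ‖x‖ = ‖((∑ i : Fin ℓ, tauEmbN ρ σ fun j =>
                algebraMap (NumberField.RingOfIntegers K) K (cc i j)) + x)
                - (∑ i : Fin ℓ, tauEmbN ρ σ fun j =>
                  algebraMap (NumberField.RingOfIntegers K) K (cc i j))‖ := by rw [← hxe]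
            _ ≤ ‖(∑ i : Fin ℓ, tauEmbN ρ σ fun j =>
                algebraMap (NumberField.RingOfIntegers K) K (cc i j)) + x‖
                + ‖∑ i : Fin ℓ, tauEmbN ρ σ fun j =>
                  algebraMap (NumberField.RingOfIntegers K) K (cc i j)‖ := norm_sub_le _ _
            _ ≤ R + T := add_le_add hz' hv
      -- the key separation property of Q
      have hkey : ∀ z ∈ Q, ∀ z' ∈ Q, z ≠ z' → minDist P ≤ dist z z' := by
        rintro z ⟨cz, hcz, xz, hxz, rfl⟩ z' ⟨cz', hcz', xz', hxz', rfl⟩ hzz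
        apply pk9_key_dist ρ σ hemb.2 p hp0 S hSsub hSsep C hCsub d hCd P hP hd
          cz cz' hcz hcz' xz xz' hxz hxz'
        by_contra hcon
        push_neg at hcon
        exact hzz (by rw [hcon.1, hcon.2])
      have hDistSetP_ne : {dd : ℝ | ∃ x ∈ P, ∃ y ∈ P, x ≠ y ∧ dist x y = dd}.Nonempty := by
        by_contra h
        rw [Set.not_nonempty_iff_eq_empty] at h
        have : minDist P = 0 := by rw [minDist, h, Real.sInf_empty]
        linarith
      have hDistSetQ_ne : {dd : ℝ | ∃ x ∈ Q, ∃ y ∈ Q, x ≠ y ∧ dist x y = dd}.Nonempty := by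
        obtain ⟨dd, x, hx, y, hy, hxy, rfl⟩ := hDistSetP_ne
        exact ⟨_, x, hPQ hx, y, hPQ hy, hxy, rfl⟩
      have hQP : minDist Q = minDist P := by
        apply le_antisymm
        · apply csInf_le_csInf
          · exact ⟨0, by rintro dd ⟨a, _, b, _, _, rfl⟩; exact dist_nonneg⟩
          · exact hDistSetP_ne
          · rintro dd ⟨x, hx, y, hy, hxy, rfl⟩
            exact ⟨x, hPQ hx, y, hPQ hy, hxy, rfl⟩
        · apply le_csInf hDistSetQ_ne
          rintro dd ⟨x, hx, y, hy, hxy, rfl⟩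
          exact hkey x hx y hy hxy
      -- counting
      have hcount : ∀ R : ℝ, (∏ i : Fin ℓ, M i) * Nat.card ↥(P ∩ Metric.closedBall 0 R)
          ≤ Nat.card ↥(Q ∩ Metric.closedBall 0 (R + T)) := by
        intro R
        haveI : ∀ i : Fin ℓ, Finite ↥(C i) := fun i => (hCfin i).to_subtype
        haveI : Finite ↥(Q ∩ Metric.closedBall 0 (R + T)) := (hQfin (R + T)).to_subtype
        have hmem : ∀ cx : (∀ i : Fin ℓ, ↥(C i)) × ↥(P ∩ Metric.closedBall 0 R),
            ((∑ i : Fin ℓ, tauEmbN ρ σ fun j =>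
              algebraMap (NumberField.RingOfIntegers K) K ((cx.1 i : Fin n →
                NumberField.RingOfIntegers K) j))
              + (cx.2 : EuclideanSpace ℝ (Fin n × PackIdx s t)))
              ∈ Q ∩ Metric.closedBall 0 (R + T) := by
          intro cx
          constructor
          · exact ⟨fun i => (cx.1 i : Fin n → NumberField.RingOfIntegers K),
              fun i => (cx.1 i).2, (cx.2 : EuclideanSpace ℝ (Fin n × PackIdx s t)),
              cx.2.2.1, rfl⟩
          · rw [mem_closedBall_zero_iff]
            have h1 := hT (fun i => (cx.1 i : Fin n → NumberField.RingOfIntegers K))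
              (fun i => (cx.1 i).2)
            have h2 : ‖(cx.2 : EuclideanSpace ℝ (Fin n × PackIdx s t))‖ ≤ R :=
              mem_closedBall_zero_iff.mp cx.2.2.2
            refine le_trans (norm_add_le _ _) ?_
            linarith
        set Φ : (∀ i : Fin ℓ, ↥(C i)) × ↥(P ∩ Metric.closedBall 0 R)
            → ↥(Q ∩ Metric.closedBall 0 (R + T)) :=
          fun cx => ⟨_, hmem cx⟩ with hΦdef
        have hΦinj : Function.Injective Φ := by
          rintro ⟨c1, x1⟩ ⟨c2, x2⟩ hEq
          have hv := congrArg Subtype.val hEq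
          simp only [hΦdef] at hv
          by_contra hne'
          have hor : (fun i => (c1 i : Fin n → NumberField.RingOfIntegers K))
              ≠ (fun i => (c2 i : Fin n → NumberField.RingOfIntegers K))
              ∨ (x1 : EuclideanSpace ℝ (Fin n × PackIdx s t))
                ≠ (x2 : EuclideanSpace ℝ (Fin n × PackIdx s t)) := by
            by_contra hcon
            push_neg at hcon
            apply hne'
            have hc12 : c1 = c2 := funext fun i => Subtype.ext (congrFun hcon.1 i)
            have hx12 : x1 = x2 := Subtype.ext hcon.2
            rw [hc12, hx12]
          have hd2 := pk9_key_dist ρ σ hemb.2 p hp0 S hSsub hSsep C hCsub d hCd P hP hd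
            (fun i => (c1 i : Fin n → NumberField.RingOfIntegers K))
            (fun i => (c2 i : Fin n → NumberField.RingOfIntegers K))
            (fun i => (c1 i).2) (fun i => (c2 i).2)
            (x1 : EuclideanSpace ℝ (Fin n × PackIdx s t))
            (x2 : EuclideanSpace ℝ (Fin n × PackIdx s t)) x1.2.1 x2.2.1 hor
          rw [hv, dist_self] at hd2
          linarith
        calc (∏ i : Fin ℓ, M i) * Nat.card ↥(P ∩ Metric.closedBall 0 R)
            = Nat.card ((∀ i : Fin ℓ, ↥(C i)) × ↥(P ∩ Metric.closedBall 0 R)) := by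
              rw [Nat.card_prod, Nat.card_pi]
              congr 1
              exact (Finset.prod_congr rfl fun i _ => (hCM i)).symm
          _ ≤ Nat.card ↥(Q ∩ Metric.closedBall 0 (R + T)) :=
              Nat.card_le_card_of_injective Φ hΦinj
      -- boundedness of densities
      have hfP1 : ∀ R, fP R ≤ 1 := by
        intro R
        rw [hfPdef]
        exact pk9_density_le_one P hPfin R
      have hfQ1 : ∀ R, fQ R ≤ 1 := by
        intro R
        rw [hfQdef]
        exact pk9_density_le_one Q hQfin R
      have hbddP : Filter.IsBoundedUnder (· ≤ ·) Filter.atTop fP :=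
        Filter.isBoundedUnder_of ⟨1, hfP1⟩
      have hbddQ : Filter.IsBoundedUnder (· ≤ ·) Filter.atTop fQ :=
        Filter.isBoundedUnder_of ⟨1, hfQ1⟩
      have hD0 : 0 ≤ packDensity P := by
        rw [hDP]
        exact Filter.le_limsup_of_frequently_le (Filter.Frequently.of_forall hfP0) hbddP
      -- volume formula
      have hVpos : 0 < unitBallVol (Fin n × PackIdx s t) := by
        rw [unitBallVol]
        exact ENNReal.toReal_pos (measure_ball_pos volume 0 one_pos).ne' measure_ball_lt_top.ne
      have hvol : ∀ u : ℝ, 0 ≤ u →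
          (volume (Metric.closedBall (0 : EuclideanSpace ℝ (Fin n × PackIdx s t)) u)).toReal
          = u ^ (Fintype.card (Fin n × PackIdx s t)) * unitBallVol (Fin n × PackIdx s t) := by
        intro u hu
        rw [Measure.addHaar_closedBall _ _ hu, finrank_euclideanSpace, ENNReal.toReal_mul,
          ENNReal.toReal_ofReal (by positivity)]
        rfl
      -- main estimate for every small ε
      have hmain : ∀ ε : ℝ, 0 < ε → ε ≤ 1 →
          (1 - ε) * ((packDensity P - ε) * ∏ i : Fin ℓ, (M i : ℝ)) ≤ packDensity Q := by
        intro ε hε hε1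
        have hr0 : 0 < minDist P / 2 := by linarith
        have hratio : Filter.Tendsto (fun R : ℝ =>
            ((R + minDist P / 2)/(R + T + minDist P / 2))
              ^ (Fintype.card (Fin n × PackIdx s t)))
            Filter.atTop (nhds 1) := by
          have h1 : Filter.Tendsto (fun R : ℝ => (R + minDist P / 2)/(R + T + minDist P / 2))
              Filter.atTop (nhds 1) := by
            have heq : ∀ᶠ R in Filter.atTop, (R + minDist P / 2)/(R + T + minDist P / 2)
                = 1 - T/(R + T + minDist P / 2) := by
              filter_upwards [Filter.eventually_gt_atTop (-(T + minDist P / 2))] with R hR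
              have hpos : 0 < R + T + minDist P / 2 := by linarith
              have heq' : (R + minDist P / 2) = (R + T + minDist P / 2) - T := by ring
              rw [heq', sub_div, div_self hpos.ne']
            rw [Filter.tendsto_congr' heq]
            have h2 : Filter.Tendsto (fun R : ℝ => T/(R + T + minDist P / 2))
                Filter.atTop (nhds 0) := by
              apply Filter.Tendsto.div_atTop tendsto_const_nhds
              have h3 : Filter.Tendsto (fun R : ℝ => R + (T + minDist P / 2))
                  Filter.atTop Filter.atTop :=
                tendsto_atTop_add_const_right Filter.atTop _ Filter.tendsto_id
              have h4 : (fun R : ℝ => R + T + minDist P / 2)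
                  = fun R : ℝ => R + (T + minDist P / 2) := by
                funext R; ring
              rw [h4]; exact h3
            have h5 := (tendsto_const_nhds (x := (1:ℝ)) (f := Filter.atTop)).sub h2
            simpa using h5
          have h6 := h1.pow (Fintype.card (Fin n × PackIdx s t))
          simpa using h6
        have hrat_ev : ∀ᶠ R in Filter.atTop,
            (1 - ε) * (R + T + minDist P / 2) ^ (Fintype.card (Fin n × PackIdx s t))
              ≤ (R + minDist P / 2) ^ (Fintype.card (Fin n × PackIdx s t)) ∧ 0 < R := by
          have h1 := hratio.eventually (eventually_gt_nhds (show 1 - ε < 1 by linarith))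
          filter_upwards [h1, Filter.eventually_gt_atTop 0] with R h2 h3
          refine ⟨?_, h3⟩
          have hy : (0:ℝ) < R + T + minDist P / 2 := by linarith
          have h7 := le_of_lt h2
          rw [div_pow, le_div_iff₀ (by positivity)] at h7
          linarith
        have hev : ∀ᶠ R in Filter.atTop,
            (1 - ε) * ((∏ i : Fin ℓ, (M i : ℝ)) * fP R) ≤ fQ (R + T) := by
          filter_upwards [hrat_ev] with R hR
          obtain ⟨hpow, hRpos⟩ := hR
          have hx1 : (0:ℝ) < R + minDist P / 2 := by linarith
          have hy1 : (0:ℝ) < R + T + minDist P / 2 := by linarith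
          have hfPval : fP R = (Nat.card ↥(P ∩ Metric.closedBall 0 R) : ℝ)
              * (minDist P / 2) ^ (Fintype.card (Fin n × PackIdx s t))
              * unitBallVol (Fin n × PackIdx s t)
              / ((R + minDist P / 2) ^ (Fintype.card (Fin n × PackIdx s t))
                * unitBallVol (Fin n × PackIdx s t)) := by
            simp only [hfPdef]
            rw [hvol (R + minDist P / 2) (by linarith)]
          have hfQval : fQ (R + T) = (Nat.card ↥(Q ∩ Metric.closedBall 0 (R + T)) : ℝ)
              * (minDist P / 2) ^ (Fintype.card (Fin n × PackIdx s t))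
              * unitBallVol (Fin n × PackIdx s t)
              / ((R + T + minDist P / 2) ^ (Fintype.card (Fin n × PackIdx s t))
                * unitBallVol (Fin n × PackIdx s t)) := by
            simp only [hfQdef]
            rw [hQP, hvol ((R + T) + minDist P / 2) (by linarith)]
          have hcnt : (∏ i : Fin ℓ, (M i : ℝ))
              * (Nat.card ↥(P ∩ Metric.closedBall 0 R) : ℝ)
              ≤ (Nat.card ↥(Q ∩ Metric.closedBall 0 (R + T)) : ℝ) := by
            have h8 := hcount R
            exact_mod_cast h8
          rw [hfPval, hfQval]
          set cardP := (Nat.card ↥(P ∩ Metric.closedBall 0 R) : ℝ) with hcardPdef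
          set cardQ := (Nat.card ↥(Q ∩ Metric.closedBall 0 (R + T)) : ℝ) with hcardQdef
          set V := unitBallVol (Fin n × PackIdx s t) with hVdef2
          set Nc := Fintype.card (Fin n × PackIdx s t) with hNcdef
          have hcardP0 : 0 ≤ cardP := by rw [hcardPdef]; exact Nat.cast_nonneg _
          have hxpos : (0:ℝ) < (R + minDist P / 2) ^ Nc * V :=
            mul_pos (pow_pos hx1 _) hVpos
          have hypos : (0:ℝ) < (R + T + minDist P / 2) ^ Nc * V :=
            mul_pos (pow_pos hy1 _) hVpos
          have hA0 : 0 ≤ cardP * (minDist P / 2) ^ Nc * V :=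
            mul_nonneg (mul_nonneg hcardP0 (pow_nonneg hr0.le _)) hVpos.le
          have hAB : (∏ i : Fin ℓ, (M i : ℝ)) * (cardP * (minDist P / 2) ^ Nc * V)
              ≤ cardQ * (minDist P / 2) ^ Nc * V := by
            have h := mul_le_mul_of_nonneg_right hcnt
              (mul_nonneg (pow_nonneg hr0.le Nc) hVpos.le)
            calc (∏ i : Fin ℓ, (M i : ℝ)) * (cardP * (minDist P / 2) ^ Nc * V)
                = ((∏ i : Fin ℓ, (M i : ℝ)) * cardP) * ((minDist P / 2) ^ Nc * V) := by ring
              _ ≤ cardQ * ((minDist P / 2) ^ Nc * V) := h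
              _ = cardQ * (minDist P / 2) ^ Nc * V := by ring
          have heq2 : (1 - ε) * ((∏ i : Fin ℓ, (M i : ℝ))
              * (cardP * (minDist P / 2) ^ Nc * V
                / ((R + minDist P / 2) ^ Nc * V)))
              = ((1 - ε) * ((∏ i : Fin ℓ, (M i : ℝ)) * (cardP * (minDist P / 2) ^ Nc * V)))
                / ((R + minDist P / 2) ^ Nc * V) := by
            ring
          rw [heq2, div_le_div_iff₀ hxpos hypos]
          have hpV : (1 - ε) * ((R + T + minDist P / 2) ^ Nc * V)
              ≤ (R + minDist P / 2) ^ Nc * V := by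
            have h9 := mul_le_mul_of_nonneg_right hpow hVpos.le
            calc (1 - ε) * ((R + T + minDist P / 2) ^ Nc * V)
                = ((1 - ε) * (R + T + minDist P / 2) ^ Nc) * V := by ring
              _ ≤ (R + minDist P / 2) ^ Nc * V := h9
          calc (1 - ε) * ((∏ i : Fin ℓ, (M i : ℝ)) * (cardP * (minDist P / 2) ^ Nc * V))
                * ((R + T + minDist P / 2) ^ Nc * V)
              = ((∏ i : Fin ℓ, (M i : ℝ)) * (cardP * (minDist P / 2) ^ Nc * V))
                * ((1 - ε) * ((R + T + minDist P / 2) ^ Nc * V)) := by ring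
            _ ≤ ((∏ i : Fin ℓ, (M i : ℝ)) * (cardP * (minDist P / 2) ^ Nc * V))
                * ((R + minDist P / 2) ^ Nc * V) :=
                mul_le_mul_of_nonneg_left hpV (mul_nonneg hMp hA0)
            _ ≤ (cardQ * (minDist P / 2) ^ Nc * V) * ((R + minDist P / 2) ^ Nc * V) :=
                mul_le_mul_of_nonneg_right hAB hxpos.le
        have hfreq : ∃ᶠ R in Filter.atTop, packDensity P - ε < fP R := by
          apply Filter.frequently_lt_of_lt_limsup
          · exact (Filter.isBoundedUnder_of (⟨0, fun x => hfP0 x⟩ :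
              ∃ b, ∀ x, fP x ≥ b) :
              Filter.IsBoundedUnder (· ≥ ·) Filter.atTop fP).isCoboundedUnder_le
          · rw [← hDP]; linarith
        have hfreq2 : ∃ᶠ R in Filter.atTop,
            (1 - ε) * ((packDensity P - ε) * ∏ i : Fin ℓ, (M i : ℝ)) ≤ fQ (R + T) := by
          apply (hfreq.and_eventually hev).mono
          rintro R ⟨h1, h2⟩
          have h1ε : (0:ℝ) ≤ 1 - ε := by linarith
          have hstep : (packDensity P - ε) * ∏ i : Fin ℓ, (M i : ℝ)
              ≤ (∏ i : Fin ℓ, (M i : ℝ)) * fP R := by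
            have h10 := mul_le_mul_of_nonneg_left (le_of_lt h1) hMp
            nlinarith
          calc (1 - ε) * ((packDensity P - ε) * ∏ i : Fin ℓ, (M i : ℝ))
              ≤ (1 - ε) * ((∏ i : Fin ℓ, (M i : ℝ)) * fP R) :=
                mul_le_mul_of_nonneg_left hstep h1ε
            _ ≤ fQ (R + T) := h2
        have hfreq3 : ∃ᶠ Rx in Filter.atTop,
            (1 - ε) * ((packDensity P - ε) * ∏ i : Fin ℓ, (M i : ℝ)) ≤ fQ Rx := by
          have htt : Filter.Tendsto (fun R : ℝ => R + T) Filter.atTop Filter.atTop :=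
            tendsto_atTop_add_const_right Filter.atTop T Filter.tendsto_id
          exact htt.frequently hfreq2
        rw [hDQ]
        exact Filter.le_limsup_of_frequently_le hfreq3 hbddQ
      -- conclude
      by_contra hcon
      push_neg at hcon
      set D := packDensity P with hDdef
      set G := packDensity Q with hGdef
      set Pm := ∏ i : Fin ℓ, (M i : ℝ) with hPmdef
      have hposden : (0:ℝ) < 2 * (Pm * (1 + D) + 1) := by nlinarith
      have hDPm : 0 < D * Pm := lt_of_le_of_lt hQnonneg hcon
      set ε := min 1 ((D * Pm - G)/(2 * (Pm * (1 + D) + 1))) with hεdef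
      have hεpos : 0 < ε :=
        lt_min one_pos (div_pos (by linarith) hposden)
      have hε1 : ε ≤ 1 := min_le_left _ _
      have hεle : ε ≤ (D * Pm - G)/(2 * (Pm * (1 + D) + 1)) := min_le_right _ _
      have hεb : ε * (2 * (Pm * (1 + D) + 1)) ≤ D * Pm - G :=
        (le_div_iff₀ hposden).mp hεle
      have hk := hmain ε hεpos hε1
      nlinarith [hk, hεb, hMp, hD0, hεpos, hε1, sq_nonneg ε, mul_nonneg hεpos.le hMp]

end
end
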